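/- arXiv:1903.05495 — 11 statements merged into one kernel-verified Lean document; each statement's English description precedes it below -/
import Mathlib

section
/- Let X and Y be disjoint sets, each of size m, where m ≥ 5. Then there exists a family F ⊆ binom(X,Y){2,2} that is two-sided intersecting and satisfies |F| ≥ 3m² − 10m + 10. -/
lemma two_mul_choose_two (n : ℕ) : 2 * n.choose 2 = n * (n - 1) := by
  cases n with
  | zero => simp
  | succ k =>
    rw [Nat.choose_succ_succ, Nat.choose_one_right]
    have h : 2 * k.choose 2 = k * (k - 1) := two_mul_choose_two k
    cases k with
    | zero => simp
    | succ j => simp only [Nat.succ_sub_one] at h ⊢; ring_nf; ring_nf at h; omega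

/-- For disjoint sets X, Y each of size m ≥ 5, there is a two-sided
intersecting family F ⊆ binom(X,Y){2,2} with |F| ≥ 3m² − 10m + 10. -/
theorem stmt_0 {α : Type*} [DecidableEq α] (m : ℕ) (hm : 5 ≤ m)
    (X Y : Finset α) (hdisj : Disjoint X Y) (hX : X.card = m) (hY : Y.card = m) :
    ∃ F : Finset (Finset α),
      (∀ S ∈ F, S ⊆ X ∪ Y ∧ (S ∩ X).card = 2 ∧ (S ∩ Y).card = 2) ∧
      (∀ A ∈ F, ∀ B ∈ F, (A ∩ B).Nonempty) ∧
      (∃ F11 ∈ F, ∃ F12 ∈ F, F11 ∩ F12 ∩ X = ∅) ∧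
      (∃ F21 ∈ F, ∃ F22 ∈ F, F21 ∩ F22 ∩ Y = ∅) ∧
      (3 * (m : ℤ) ^ 2 - 10 * m + 10 ≤ (F.card : ℤ)) := by
  classical
  have hXY : ∀ a ∈ X, a ∉ Y := fun a ha hb => Finset.disjoint_left.mp hdisj ha hb
  -- pick distinct elements
  have pick : ∀ Z : Finset α, Z.card = m → ∀ s : Finset α, s.card ≤ 3 → ∃ a ∈ Z, a ∉ s := by
    intro Z hZ s hs
    have h1 : 0 < (Z \ s).card := by
      have := Finset.le_card_sdiff s Z
      omega
    obtain ⟨a, ha⟩ := Finset.card_pos.mp h1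
    exact ⟨a, (Finset.mem_sdiff.mp ha).1, (Finset.mem_sdiff.mp ha).2⟩
  have c2le : ∀ a b : α, ({a, b} : Finset α).card ≤ 2 :=
    fun a b => (Finset.card_insert_le _ _).trans (by simp)
  have c3le : ∀ a b c : α, ({a, b, c} : Finset α).card ≤ 3 :=
    fun a b c => (Finset.card_insert_le _ _).trans (Nat.succ_le_succ (c2le b c))
  obtain ⟨x1, hx1X, -⟩ := pick X hX ∅ (by simp)
  obtain ⟨x2, hx2X, hx2⟩ := pick X hX {x1} (by simp)
  obtain ⟨x3, hx3X, hx3⟩ := pick X hX {x1, x2} ((c2le _ _).trans (by omega))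
  obtain ⟨x4, hx4X, hx4⟩ := pick X hX {x1, x2, x3} (c3le _ _ _)
  obtain ⟨y1, hy1Y, -⟩ := pick Y hY ∅ (by simp)
  obtain ⟨y2, hy2Y, hy2⟩ := pick Y hY {y1} (by simp)
  obtain ⟨y3, hy3Y, hy3⟩ := pick Y hY {y1, y2} ((c2le _ _).trans (by omega))
  obtain ⟨y4, hy4Y, hy4⟩ := pick Y hY {y1, y2, y3} (c3le _ _ _)
  simp only [Finset.mem_insert, Finset.mem_singleton, not_or] at hx2 hx3 hx4 hy2 hy3 hy4
  -- the family
  set P2 : Finset (Finset α) := Y.powersetCard 2 with hP2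
  set Pm : Finset (Finset α) := P2.filter (fun p => y1 ∈ p ∨ y2 ∈ p) with hPm
  set F1 : Finset (Finset α) := P2.image (fun p => insert x1 (insert x2 p)) with hF1
  set F1' : Finset (Finset α) := P2.image (fun p => insert x1 (insert x3 p)) with hF1'
  set F2 : Finset (Finset α) :=
    ((X \ {x1, x2, x3}) ×ˢ Pm).image (fun q => insert x1 (insert q.1 q.2)) with hF2
  set F3 : Finset α := {x2, x3, y1, y2} with hF3
  refine ⟨F1 ∪ F1' ∪ F2 ∪ {F3}, ?_, ?_, ?_, ?_, ?_⟩ <;> clear hdisj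
  -- key structural lemma
  all_goals
    have key : ∀ b ∈ X, ∀ p ∈ Y.powersetCard 2,
        (insert x1 (insert b p)) ⊆ X ∪ Y ∧ (insert x1 (insert b p)) ∩ X = {x1, b} ∧
          (insert x1 (insert b p)) ∩ Y = p := by
      intro b hb p hp
      have hpY : p ⊆ Y := (Finset.mem_powersetCard.mp hp).1
      refine ⟨?_, ?_, ?_⟩
      · intro z hz
        simp only [Finset.mem_insert] at hz
        rcases hz with rfl | rfl | hz
        · exact Finset.mem_union_left _ hx1X
        · exact Finset.mem_union_left _ hb
        · exact Finset.mem_union_right _ (hpY hz)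
      · ext z
        simp only [Finset.mem_inter, Finset.mem_insert, Finset.mem_singleton]
        constructor
        · rintro ⟨rfl | rfl | hz, hzX⟩
          · exact Or.inl rfl
          · exact Or.inr rfl
          · exact absurd (hpY hz) (hXY z hzX)
        · rintro (rfl | rfl)
          · exact ⟨Or.inl rfl, hx1X⟩
          · exact ⟨Or.inr (Or.inl rfl), hb⟩
      · ext z
        simp only [Finset.mem_inter, Finset.mem_insert]
        constructor
        · rintro ⟨rfl | rfl | hz, hzY⟩
          · exact absurd hzY (hXY _ hx1X)
          · exact absurd hzY (hXY _ hb)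
          · exact hz
        · exact fun hz => ⟨Or.inr (Or.inr hz), hpY hz⟩
  all_goals
    have keyF3 : F3 ⊆ X ∪ Y ∧ F3 ∩ X = {x2, x3} ∧ F3 ∩ Y = {y1, y2} := by
      refine ⟨?_, ?_, ?_⟩
      · intro z hz
        simp only [hF3, Finset.mem_insert, Finset.mem_singleton] at hz
        rcases hz with rfl | rfl | rfl | rfl
        · exact Finset.mem_union_left _ hx2X
        · exact Finset.mem_union_left _ hx3X
        · exact Finset.mem_union_right _ hy1Y
        · exact Finset.mem_union_right _ hy2Y
      · ext z
        simp only [hF3, Finset.mem_inter, Finset.mem_insert, Finset.mem_singleton]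
        constructor
        · rintro ⟨rfl | rfl | rfl | rfl, hzX⟩
          · exact Or.inl rfl
          · exact Or.inr rfl
          · exact absurd hy1Y (hXY z hzX)
          · exact absurd hy2Y (hXY z hzX)
        · rintro (rfl | rfl)
          · exact ⟨Or.inl rfl, hx2X⟩
          · exact ⟨Or.inr (Or.inl rfl), hx3X⟩
      · ext z
        simp only [hF3, Finset.mem_inter, Finset.mem_insert, Finset.mem_singleton]
        constructor
        · rintro ⟨rfl | rfl | rfl | rfl, hzY⟩
          · exact absurd hzY (hXY _ hx2X)
          · exact absurd hzY (hXY _ hx3X)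
          · exact Or.inl rfl
          · exact Or.inr rfl
        · rintro (rfl | rfl)
          · exact ⟨Or.inr (Or.inr (Or.inl rfl)), hy1Y⟩
          · exact ⟨Or.inr (Or.inr (Or.inr rfl)), hy2Y⟩
  all_goals
    have hmem : ∀ S ∈ F1 ∪ F1' ∪ F2 ∪ {F3},
        (∃ b, (b = x2 ∨ b = x3) ∧ ∃ p ∈ P2, S = insert x1 (insert b p)) ∨
        (∃ a ∈ X \ ({x1, x2, x3} : Finset α), ∃ p ∈ Pm, S = insert x1 (insert a p)) ∨
        S = F3 := by
      intro S hS
      simp only [Finset.mem_union, Finset.mem_singleton, hF1, hF1', hF2,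
        Finset.mem_image, Finset.mem_product, Prod.exists] at hS
      rcases hS with ((⟨p, hp, rfl⟩ | ⟨p, hp, rfl⟩) | ⟨a, p, ⟨haX, hpPm⟩, rfl⟩) | rfl
      · exact Or.inl ⟨x2, Or.inl rfl, p, hp, rfl⟩
      · exact Or.inl ⟨x3, Or.inr rfl, p, hp, rfl⟩
      · exact Or.inr (Or.inl ⟨a, haX, p, hpPm, rfl⟩)
      · exact Or.inr (Or.inr rfl)
  -- now the five goals
  · -- shape conditions
    intro S hS
    rcases hmem S hS with ⟨b, hb, p, hp, rfl⟩ | ⟨a, ha, p, hp, rfl⟩ | rfl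
    · have hbX : b ∈ X := by rcases hb with rfl | rfl <;> assumption
      have hbne : x1 ≠ b := by
        rcases hb with rfl | rfl
        · exact fun h => hx2 h.symm
        · exact fun h => hx3.1 h.symm
      obtain ⟨h1, h2, h3⟩ := key b hbX p hp
      exact ⟨h1, by rw [h2]; exact Finset.card_pair hbne, by
        rw [h3]; exact (Finset.mem_powersetCard.mp hp).2⟩
    · rw [Finset.mem_sdiff] at ha
      have haX : a ∈ X := ha.1
      have hane : x1 ≠ a := by
        intro h; exact ha.2 (by simp [← h])
      have hpP2 : p ∈ P2 := (Finset.mem_filter.mp hp).1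
      obtain ⟨h1, h2, h3⟩ := key a haX p hpP2
      exact ⟨h1, by rw [h2]; exact Finset.card_pair hane, by
        rw [h3]; exact (Finset.mem_powersetCard.mp hpP2).2⟩
    · obtain ⟨h1, h2, h3⟩ := keyF3
      refine ⟨h1, by rw [h2]; exact Finset.card_pair (fun h => hx3.2 h.symm), by
        rw [h3]; exact Finset.card_pair (fun h => hy2 h.symm)⟩
  · -- intersecting
    have hx1mem : ∀ S ∈ F1 ∪ F1' ∪ F2 ∪ {F3}, x1 ∈ S ∨ S = F3 := by
      intro S hS
      rcases hmem S hS with ⟨b, hb, p, hp, rfl⟩ | ⟨a, ha, p, hp, rfl⟩ | rfl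
      · exact Or.inl (Finset.mem_insert_self _ _)
      · exact Or.inl (Finset.mem_insert_self _ _)
      · exact Or.inr rfl
    have hmeetF3 : ∀ S ∈ F1 ∪ F1' ∪ F2 ∪ {F3}, (S ∩ F3).Nonempty := by
      intro S hS
      rcases hmem S hS with ⟨b, hb, p, hp, rfl⟩ | ⟨a, ha, p, hp, rfl⟩ | rfl
      · refine ⟨b, Finset.mem_inter.mpr ⟨Finset.mem_insert_of_mem (Finset.mem_insert_self _ _), ?_⟩⟩
        rcases hb with rfl | rfl
        · exact Finset.mem_insert_self _ _
        · exact Finset.mem_insert_of_mem (Finset.mem_insert_self _ _)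
      · have := (Finset.mem_filter.mp hp).2
        rcases this with h | h
        · exact ⟨y1, Finset.mem_inter.mpr ⟨Finset.mem_insert_of_mem (Finset.mem_insert_of_mem h),
            by simp [hF3]⟩⟩
        · exact ⟨y2, Finset.mem_inter.mpr ⟨Finset.mem_insert_of_mem (Finset.mem_insert_of_mem h),
            by simp [hF3]⟩⟩
      · exact ⟨y1, by simp [hF3]⟩
    intro A hA B hB
    rcases hx1mem A hA with hA1 | rfl
    · rcases hx1mem B hB with hB1 | rfl
      · exact ⟨x1, Finset.mem_inter.mpr ⟨hA1, hB1⟩⟩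
      · obtain ⟨z, hz⟩ := hmeetF3 A hA
        rw [Finset.mem_inter] at hz
        exact ⟨z, Finset.mem_inter.mpr ⟨hz.1, hz.2⟩⟩
    · obtain ⟨z, hz⟩ := hmeetF3 B hB
      rw [Finset.mem_inter] at hz
      exact ⟨z, Finset.mem_inter.mpr ⟨hz.2, hz.1⟩⟩
  · -- X-side witnesses: F3 and {x1,x4,y1,y2}
    have hp12 : ({y1, y2} : Finset α) ∈ Pm := by
      rw [hPm, Finset.mem_filter]
      refine ⟨Finset.mem_powersetCard.mpr ⟨?_, Finset.card_pair (fun h => hy2 h.symm)⟩, Or.inl (by simp)⟩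
      intro z hz
      rcases Finset.mem_insert.mp hz with rfl | hz
      · exact hy1Y
      · rw [Finset.mem_singleton.mp hz]; exact hy2Y
    have hx4mem : x4 ∈ X \ ({x1, x2, x3} : Finset α) := by
      rw [Finset.mem_sdiff]
      exact ⟨hx4X, by simp [hx4.1, hx4.2.1, hx4.2.2]⟩
    refine ⟨F3, by simp, insert x1 (insert x4 {y1, y2}), ?_, ?_⟩
    · refine Finset.mem_union_left _ (Finset.mem_union_right _ ?_)
      rw [hF2, Finset.mem_image]
      exact ⟨(x4, {y1, y2}), Finset.mem_product.mpr ⟨hx4mem, hp12⟩, rfl⟩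
    · rw [Finset.eq_empty_iff_forall_notMem]
      intro z hz
      simp only [Finset.mem_inter, hF3, Finset.mem_insert, Finset.mem_singleton] at hz
      obtain ⟨⟨h1, h2⟩, hzX⟩ := hz
      rcases h1 with h1 | h1 | h1 | h1
      · rcases h2 with h | h | h | h
        · exact hx2 (h1.symm.trans h)
        · exact hx4.2.1 (h.symm.trans h1)
        · exact hXY z hzX (h.symm ▸ hy1Y)
        · exact hXY z hzX (h.symm ▸ hy2Y)
      · rcases h2 with h | h | h | h
        · exact hx3.1 (h1.symm.trans h)
        · exact hx4.2.2 (h.symm.trans h1)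
        · exact hXY z hzX (h.symm ▸ hy1Y)
        · exact hXY z hzX (h.symm ▸ hy2Y)
      · exact hXY z hzX (h1.symm ▸ hy1Y)
      · exact hXY z hzX (h1.symm ▸ hy2Y)
  · -- Y-side witnesses: {x1,x2,y1,y3} and {x1,x2,y2,y4}
    have hp13 : ({y1, y3} : Finset α) ∈ P2 := by
      refine Finset.mem_powersetCard.mpr ⟨?_, Finset.card_pair (fun h => hy3.1 h.symm)⟩
      intro z hz
      rcases Finset.mem_insert.mp hz with rfl | hz
      · exact hy1Y
      · rw [Finset.mem_singleton.mp hz]; exact hy3Y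
    have hp24 : ({y2, y4} : Finset α) ∈ P2 := by
      refine Finset.mem_powersetCard.mpr ⟨?_, Finset.card_pair (fun h => hy4.2.1 h.symm)⟩
      intro z hz
      rcases Finset.mem_insert.mp hz with rfl | hz
      · exact hy2Y
      · rw [Finset.mem_singleton.mp hz]; exact hy4Y
    refine ⟨insert x1 (insert x2 {y1, y3}), ?_, insert x1 (insert x2 {y2, y4}), ?_, ?_⟩
    · refine Finset.mem_union_left _ (Finset.mem_union_left _ (Finset.mem_union_left _ ?_))
      rw [hF1, Finset.mem_image]; exact ⟨{y1, y3}, hp13, rfl⟩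
    · refine Finset.mem_union_left _ (Finset.mem_union_left _ (Finset.mem_union_left _ ?_))
      rw [hF1, Finset.mem_image]; exact ⟨{y2, y4}, hp24, rfl⟩
    · rw [Finset.eq_empty_iff_forall_notMem]
      intro z hz
      simp only [Finset.mem_inter, Finset.mem_insert, Finset.mem_singleton] at hz
      obtain ⟨⟨h1, h2⟩, hzY⟩ := hz
      rcases h1 with h1 | h1 | h1 | h1
      · exact hXY _ hx1X (h1 ▸ hzY)
      · exact hXY _ hx2X (h1 ▸ hzY)
      · rcases h2 with h | h | h | h
        · exact hXY _ hx1X (h ▸ hzY)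
        · exact hXY _ hx2X (h ▸ hzY)
        · exact hy2 (h1.symm.trans h).symm
        · exact hy4.1 (h.symm.trans h1)
      · rcases h2 with h | h | h | h
        · exact hXY _ hx1X (h ▸ hzY)
        · exact hXY _ hx2X (h ▸ hzY)
        · exact hy3.2 (h1.symm.trans h)
        · exact hy4.2.2 (h.symm.trans h1)
  · -- cardinality
    -- intersections recover data, so images are injective
    have hinj1 : ∀ b ∈ X, Set.InjOn (fun p => insert x1 (insert b p)) (P2 : Set (Finset α)) := by
      intro b hb p hp p' hp' h
      have e1 := (key b hb p hp).2.2
      have e2 := (key b hb p' hp').2.2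
      simp only at h
      rw [← e1, ← e2, h]
    have card1 : F1.card = P2.card := Finset.card_image_of_injOn (hinj1 x2 hx2X)
    have card1' : F1'.card = P2.card := Finset.card_image_of_injOn (hinj1 x3 hx3X)
    have card2 : F2.card = (X \ ({x1, x2, x3} : Finset α)).card * Pm.card := by
      rw [hF2, Finset.card_image_of_injOn, Finset.card_product]
      rintro ⟨a, p⟩ hq ⟨a', p'⟩ hq' h
      rw [Finset.mem_coe, Finset.mem_product] at hq hq'
      obtain ⟨ha, hp⟩ := hq
      obtain ⟨ha', hp'⟩ := hq'
      have haX := (Finset.mem_sdiff.mp ha).1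
      have haX' := (Finset.mem_sdiff.mp ha').1
      have hpP2 : p ∈ P2 := (Finset.mem_filter.mp hp).1
      have hpP2' : p' ∈ P2 := (Finset.mem_filter.mp hp').1
      simp only at h
      have ep : p = p' := by
        have e1 := (key a haX p hpP2).2.2
        have e2 := (key a' haX' p' hpP2').2.2
        rw [← e1, ← e2, h]
      have ea : a = a' := by
        have e1 := (key a haX p hpP2).2.1
        have e2 := (key a' haX' p' hpP2').2.1
        rw [h] at e1
        rw [e2] at e1
        have : a ∈ ({x1, a'} : Finset α) := e1 ▸ (by simp)
        rcases Finset.mem_insert.mp this with h' | h'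
        · exact absurd (by simp [h']) (Finset.mem_sdiff.mp ha).2
        · exact Finset.mem_singleton.mp h'
      exact Prod.ext ea ep
    -- disjointness of pieces
    have hXpart : ∀ b ∈ X, ∀ S, (∃ p ∈ P2, S = insert x1 (insert b p)) → S ∩ X = {x1, b} := by
      rintro b hb S ⟨p, hp, rfl⟩
      exact (key b hb p hp).2.1
    have dis1 : Disjoint F1 F1' := by
      rw [Finset.disjoint_left]
      intro S hS hS'
      rw [hF1, Finset.mem_image] at hS
      rw [hF1', Finset.mem_image] at hS'
      obtain ⟨p, hp, rfl⟩ := hS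
      obtain ⟨p', hp', he⟩ := hS'
      have e1 := (key x2 hx2X p hp).2.1
      have e2 := (key x3 hx3X p' hp').2.1
      rw [he] at e2
      rw [e1] at e2
      have : x3 ∈ ({x1, x2} : Finset α) := by rw [e2]; simp
      rcases Finset.mem_insert.mp this with h | h
      · exact hx3.1 h
      · exact hx3.2 (Finset.mem_singleton.mp h)
    have dis2 : Disjoint (F1 ∪ F1') F2 := by
      rw [Finset.disjoint_left]
      intro S hS hS'
      rw [hF2, Finset.mem_image] at hS'
      obtain ⟨⟨a, p⟩, hq, he⟩ := hS'
      rw [Finset.mem_product] at hq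
      have haX := (Finset.mem_sdiff.mp hq.1).1
      have hana := (Finset.mem_sdiff.mp hq.1).2
      simp only [Finset.mem_insert, Finset.mem_singleton, not_or] at hana
      have hpP2 : p ∈ P2 := (Finset.mem_filter.mp hq.2).1
      have e2 := (key a haX p hpP2).2.1
      rw [he] at e2
      rcases Finset.mem_union.mp hS with h | h
      · rw [hF1, Finset.mem_image] at h
        obtain ⟨p', hp', rfl⟩ := h
        have e1 := (key x2 hx2X p' hp').2.1
        rw [e1] at e2
        have : a ∈ ({x1, x2} : Finset α) := by rw [e2]; simp
        rcases Finset.mem_insert.mp this with h' | h'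
        · exact hana.1 h'
        · exact hana.2.1 (Finset.mem_singleton.mp h')
      · rw [hF1', Finset.mem_image] at h
        obtain ⟨p', hp', rfl⟩ := h
        have e1 := (key x3 hx3X p' hp').2.1
        rw [e1] at e2
        have : a ∈ ({x1, x3} : Finset α) := by rw [e2]; simp
        rcases Finset.mem_insert.mp this with h' | h'
        · exact hana.1 h'
        · exact hana.2.2 (Finset.mem_singleton.mp h')
    have dis3 : Disjoint (F1 ∪ F1' ∪ F2) {F3} := by
      rw [Finset.disjoint_right]
      intro S hS hS'
      rw [Finset.mem_singleton] at hS
      subst hS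
      have hx1F3 : x1 ∉ F3 := by
        simp only [hF3, Finset.mem_insert, Finset.mem_singleton, not_or]
        exact ⟨fun h => hx2 h.symm, fun h => hx3.1 h.symm,
          fun h => hXY x1 hx1X (h.symm ▸ hy1Y), fun h => hXY x1 hx1X (h.symm ▸ hy2Y)⟩
      apply hx1F3
      rcases Finset.mem_union.mp hS' with h | h
      · rcases Finset.mem_union.mp h with h' | h'
        · rw [hF1, Finset.mem_image] at h'
          obtain ⟨p, hp, he⟩ := h'
          rw [← he]; exact Finset.mem_insert_self _ _
        · rw [hF1', Finset.mem_image] at h'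
          obtain ⟨p, hp, he⟩ := h'
          rw [← he]; exact Finset.mem_insert_self _ _
      · rw [hF2, Finset.mem_image] at h
        obtain ⟨q, hq, he⟩ := h
        rw [← he]; exact Finset.mem_insert_self _ _
    have cardU : (F1 ∪ F1' ∪ F2 ∪ {F3}).card = F1.card + F1'.card + F2.card + 1 := by
      rw [Finset.card_union_of_disjoint dis3, Finset.card_union_of_disjoint dis2,
        Finset.card_union_of_disjoint dis1, Finset.card_singleton]
    -- counts
    have cardP2 : P2.card = m.choose 2 := by rw [hP2, Finset.card_powersetCard, hY]
    have cardPm : Pm.card + (m - 2).choose 2 = m.choose 2 := by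
      have hsplit := Finset.card_filter_add_card_filter_not
        (s := P2) (p := fun p => y1 ∈ p ∨ y2 ∈ p)
      have hneg : P2.filter (fun p => ¬ (y1 ∈ p ∨ y2 ∈ p)) = (Y \ {y1, y2}).powersetCard 2 := by
        ext p
        simp only [hP2, Finset.mem_filter, Finset.mem_powersetCard, Finset.subset_sdiff,
          Finset.disjoint_insert_right, Finset.disjoint_singleton_right, not_or]
        tauto
      have hYsd : (Y \ ({y1, y2} : Finset α)).card = m - 2 := by
        rw [Finset.card_sdiff_of_subset, hY, Finset.card_pair (fun h => hy2 h.symm)]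
        intro z hz
        rcases Finset.mem_insert.mp hz with rfl | hz
        · exact hy1Y
        · rw [Finset.mem_singleton.mp hz]; exact hy2Y
      rw [hneg, Finset.card_powersetCard, hYsd] at hsplit
      rw [← cardP2]
      exact hsplit
    have hsub3 : ({x1, x2, x3} : Finset α) ⊆ X := by
      intro z hz
      rcases Finset.mem_insert.mp hz with rfl | hz
      · exact hx1X
      rcases Finset.mem_insert.mp hz with rfl | hz
      · exact hx2X
      · rw [Finset.mem_singleton.mp hz]; exact hx3X
    have hc3 : ({x1, x2, x3} : Finset α).card = 3 := by
      rw [Finset.card_insert_of_notMem (by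
        simp only [Finset.mem_insert, Finset.mem_singleton, not_or]
        exact ⟨fun h => hx2 h.symm, fun h => hx3.1 h.symm⟩),
        Finset.card_pair (fun h => hx3.2 h.symm)]
    have cardXsd : (X \ ({x1, x2, x3} : Finset α)).card = m - 3 := by
      rw [Finset.card_sdiff_of_subset hsub3, hX, hc3]
    -- integer arithmetic
    have h2c : 2 * m.choose 2 = m * (m - 1) := two_mul_choose_two m
    have h2c' : 2 * (m - 2).choose 2 = (m - 2) * (m - 3) := by
      rw [two_mul_choose_two, Nat.sub_sub]
    set M : ℤ := (m : ℤ) with hM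
    have hMc : ((m - 1 : ℕ) : ℤ) = M - 1 := by push_cast [Nat.cast_sub (by omega : 1 ≤ m)]; ring
    have hMc2 : ((m - 2 : ℕ) : ℤ) = M - 2 := by push_cast [Nat.cast_sub (by omega : 2 ≤ m)]; ring
    have hMc3 : ((m - 3 : ℕ) : ℤ) = M - 3 := by push_cast [Nat.cast_sub (by omega : 3 ≤ m)]; ring
    have h2cZ : 2 * (m.choose 2 : ℤ) = M * (M - 1) := by
      have := congrArg (Nat.cast : ℕ → ℤ) h2c
      push_cast at this
      rw [hMc] at this
      · exact_mod_cast this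
    have h2cZ' : 2 * ((m - 2).choose 2 : ℤ) = (M - 2) * (M - 3) := by
      have := congrArg (Nat.cast : ℕ → ℤ) h2c'
      push_cast at this
      rw [hMc2, hMc3] at this
      exact_mod_cast this
    have hPmZ : (Pm.card : ℤ) + ((m - 2).choose 2 : ℤ) = (m.choose 2 : ℤ) := by exact_mod_cast cardPm
    have hcardZ : ((F1 ∪ F1' ∪ F2 ∪ {F3}).card : ℤ) =
        (m.choose 2 : ℤ) + (m.choose 2 : ℤ) + (M - 3) * (Pm.card : ℤ) + 1 := by
      rw [cardU, card1, card1', card2, cardP2, cardXsd]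
      push_cast
      rw [hMc3]
    have hgoal : 2 * ((F1 ∪ F1' ∪ F2 ∪ {F3}).card : ℤ) = 6 * M ^ 2 - 20 * M + 20 := by
      linear_combination 2 * hcardZ + (2 * (M - 3)) * hPmZ + (M - 1) * h2cZ + (-(M - 3)) * h2cZ'
    linarith [hgoal]
end

section
/- For every integer k ≥ 1 there exists an integer m with m ≤ 64k + 1 and a family 𝒜 of distinct subsets of [m] that contains no configuration F₀ and satisfies 3·|𝒜| ≥ 5·C(m,2) + 3·(m + 1 + k) (equivalently |𝒜| ≥ (5/3)·C(m,2) + C(m,1) + C(m,0) + k). -/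
/-- A family `𝒜` of subsets of `[m] = {1,…,m}` contains the configuration F₀
(rows (1,1,1,1),(1,1,1,1),(1,0,0,0) up to row/column permutations): there are three
distinct elements of `[m]`, two of which lie in all four of some four distinct members
of `𝒜`, while the remaining element lies in exactly one of those four members. -/
def ContainsF0 (m : ℕ) (𝒜 : Finset (Finset ℕ)) : Prop :=
  ∃ x ∈ Finset.Icc 1 m, ∃ y ∈ Finset.Icc 1 m, ∃ z ∈ Finset.Icc 1 m,
    x ≠ y ∧ x ≠ z ∧ y ≠ z ∧
    ∃ S₁ ∈ 𝒜, ∃ S₂ ∈ 𝒜, ∃ S₃ ∈ 𝒜, ∃ S₄ ∈ 𝒜,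
      S₁ ≠ S₂ ∧ S₁ ≠ S₃ ∧ S₁ ≠ S₄ ∧ S₂ ≠ S₃ ∧ S₂ ≠ S₄ ∧ S₃ ≠ S₄ ∧
      (x ∈ S₁ ∧ x ∈ S₂ ∧ x ∈ S₃ ∧ x ∈ S₄) ∧
      (y ∈ S₁ ∧ y ∈ S₂ ∧ y ∈ S₃ ∧ y ∈ S₄) ∧
      ((if z ∈ S₁ then 1 else 0) + (if z ∈ S₂ then 1 else 0)
        + (if z ∈ S₃ then 1 else 0) + (if z ∈ S₄ then 1 else 0) = 1)


open Finset

noncomputable section AuxF0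

abbrev G4 : Type := GaloisField 2 2

noncomputable instance : Fintype G4 := Fintype.ofFinite _
noncomputable instance : DecidableEq G4 := Classical.decEq _

lemma card_G4 : Fintype.card G4 = 4 := by
  have := GaloisField.card 2 2 (by norm_num)
  simpa [Nat.card_eq_fintype_card] using this

abbrev Vn (n : ℕ) : Type := Fin n → G4

lemma card_Vn (n : ℕ) : Fintype.card (Vn n) = 4 ^ n := by
  simp [card_G4]

def bet {n : ℕ} (p q : Vn n) : Finset (Vn n) :=
  (univ : Finset G4).image (fun t => p + t • (q - p))

lemma mem_bet_left {n : ℕ} (p q : Vn n) : p ∈ bet p q := by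
  simp only [bet, mem_image]
  exact ⟨0, mem_univ _, by simp⟩

lemma mem_bet_right {n : ℕ} (p q : Vn n) : q ∈ bet p q := by
  simp only [bet, mem_image]
  exact ⟨1, mem_univ _, by simp⟩

end AuxF0

section Aux2
variable {n : ℕ}

lemma smul_dir_injective {p q : Vn n} (h : p ≠ q) :
    Function.Injective (fun t : G4 => p + t • (q - p)) := by
  intro t₁ t₂ ht
  have hd : q - p ≠ 0 := sub_ne_zero.2 (Ne.symm h)
  have h1 : t₁ • (q - p) = t₂ • (q - p) := add_left_cancel ht
  have h2 : (t₁ - t₂) • (q - p) = 0 := by rw [sub_smul, h1, sub_self]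
  rcases smul_eq_zero.1 h2 with h3 | h3
  · exact sub_eq_zero.1 h3
  · exact absurd h3 hd

lemma bet_card {p q : Vn n} (h : p ≠ q) : (bet p q).card = 4 := by
  rw [bet, Finset.card_image_of_injective _ (smul_dir_injective h), Finset.card_univ, card_G4]

lemma bet_coherent {a b p q : Vn n} (hp : p ∈ bet a b) (hq : q ∈ bet a b)
    (hpq : p ≠ q) : bet p q = bet a b := by
  simp only [bet, mem_image, mem_univ, true_and] at hp hq
  obtain ⟨s₁, hs₁⟩ := hp
  obtain ⟨s₂, hs₂⟩ := hq
  have hc : s₂ - s₁ ≠ 0 := by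
    intro h0
    apply hpq
    rw [← hs₁, ← hs₂, sub_eq_zero.1 h0]
  have hqp : q - p = (s₂ - s₁) • (b - a) := by
    rw [← hs₁, ← hs₂, sub_smul]
    abel
  have key : (fun t : G4 => p + t • (q - p)) = (fun s : G4 => a + s • (b - a)) ∘ (fun t : G4 => s₁ + t * (s₂ - s₁)) := by
    funext t
    simp only [Function.comp]
    rw [hqp, ← hs₁, smul_smul, add_smul]
    abel
  rw [bet, key, ← Finset.image_image, bet]
  congr 1
  apply Finset.image_univ_of_surjective
  intro s
  exact ⟨(s - s₁) / (s₂ - s₁), by field_simp; ring⟩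

end Aux2

section Aux3
variable {n : ℕ}

noncomputable def Des (n : ℕ) : Finset (Finset (Vn n)) :=
  (Finset.univ.offDiag : Finset (Vn n × Vn n)).image (fun pq => bet pq.1 pq.2)

lemma des_card_four {B : Finset (Vn n)} (hB : B ∈ Des n) : B.card = 4 := by
  simp only [Des, mem_image, Finset.mem_offDiag] at hB
  obtain ⟨⟨a, b⟩, ⟨-, -, hab⟩, rfl⟩ := hB
  exact bet_card hab

lemma des_block_eq {B : Finset (Vn n)} (hB : B ∈ Des n) {p q : Vn n}
    (hp : p ∈ B) (hq : q ∈ B) (hpq : p ≠ q) : B = bet p q := by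
  simp only [Des, mem_image, Finset.mem_offDiag] at hB
  obtain ⟨⟨a, b⟩, ⟨-, -, hab⟩, rfl⟩ := hB
  exact (bet_coherent hp hq hpq).symm

lemma des_inter {B₁ B₂ : Finset (Vn n)} (h₁ : B₁ ∈ Des n) (h₂ : B₂ ∈ Des n)
    (hne : B₁ ≠ B₂) : (B₁ ∩ B₂).card ≤ 1 := by
  by_contra h
  push_neg at h
  obtain ⟨p, hp, q, hq, hpq⟩ := Finset.one_lt_card.1 h
  simp only [mem_inter] at hp hq
  exact hne ((des_block_eq h₁ hp.1 hq.1 hpq).trans (des_block_eq h₂ hp.2 hq.2 hpq).symm)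

lemma des_card_lb : (4 ^ n) * (4 ^ n - 1) ≤ 12 * (Des n).card := by
  have key := Finset.card_le_mul_card_image (f := fun pq : Vn n × Vn n => bet pq.1 pq.2)
    (Finset.univ.offDiag) 12 ?_
  · calc (4 ^ n) * (4 ^ n - 1) = 4 ^ n * 4 ^ n - 4 ^ n := by
          rw [Nat.mul_sub, mul_one]
      _ = (Finset.univ.offDiag : Finset (Vn n × Vn n)).card := by
          rw [Finset.offDiag_card, Finset.card_univ, card_Vn]
      _ ≤ 12 * (Des n).card := key
  · intro B hB
    have hB' : B ∈ Des n := hB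
    have h4 : B.card = 4 := des_card_four hB'
    calc (Finset.univ.offDiag.filter fun pq : Vn n × Vn n => bet pq.1 pq.2 = B).card
        ≤ B.offDiag.card := by
          apply Finset.card_le_card
          intro pq hpq
          simp only [mem_filter, Finset.mem_offDiag] at hpq ⊢
          obtain ⟨⟨-, -, hne⟩, hbet⟩ := hpq
          exact ⟨hbet ▸ mem_bet_left _ _, hbet ▸ mem_bet_right _ _, hne⟩
      _ = 12 := by rw [Finset.offDiag_card, h4]

end Aux3

section Aux4
variable {n : ℕ}

noncomputable def phi (n : ℕ) : Vn n → ℕ := fun v => ((Fintype.equivFin (Vn n)) v).val + 1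

lemma phi_injective : Function.Injective (phi n) := by
  intro a b h
  simp only [phi, add_left_inj] at h
  exact (Fintype.equivFin (Vn n)).injective (Fin.val_injective h)

lemma phi_mem_Icc (v : Vn n) : phi n v ∈ Finset.Icc 1 (4 ^ n) := by
  simp only [Finset.mem_Icc, phi]
  refine ⟨by omega, ?_⟩
  have h1 := ((Fintype.equivFin (Vn n)) v).isLt
  have h2 := card_Vn n
  omega

noncomputable def smalls (m : ℕ) : Finset (Finset ℕ) :=
  powersetCard 0 (Finset.Icc 1 m) ∪ powersetCard 1 (Finset.Icc 1 m) ∪ powersetCard 2 (Finset.Icc 1 m)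

lemma smalls_card (m : ℕ) : (smalls m).card = 1 + m + Nat.choose m 2 := by
  rw [smalls, Finset.card_union_of_disjoint, Finset.card_union_of_disjoint]
  · simp [Nat.card_Icc]
  · simp only [Finset.disjoint_left, Finset.mem_powersetCard]
    rintro S ⟨-, h0⟩ ⟨-, h1⟩; omega
  · simp only [Finset.disjoint_left, Finset.mem_union, Finset.mem_powersetCard]
    rintro S (⟨-, h0⟩ | ⟨-, h1⟩) ⟨-, h2⟩ <;> omega

lemma mem_smalls {m : ℕ} {S : Finset ℕ} : S ∈ smalls m ↔ S ⊆ Finset.Icc 1 m ∧ S.card ≤ 2 := by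
  simp only [smalls, Finset.mem_union, Finset.mem_powersetCard]
  constructor
  · rintro ((⟨h, h0⟩ | ⟨h, h0⟩) | ⟨h, h0⟩) <;> exact ⟨h, by omega⟩
  · rintro ⟨h, hc⟩
    interval_cases hc' : S.card <;> simp_all

noncomputable def gadget (B : Finset ℕ) : Finset (Finset ℕ) :=
  insert B (B.image fun z => B.erase z)

lemma mem_gadget {B S : Finset ℕ} : S ∈ gadget B ↔ S = B ∨ ∃ z ∈ B, S = B.erase z := by
  simp only [gadget, Finset.mem_insert, Finset.mem_image]
  constructor
  · rintro (h | ⟨z, hz, h⟩)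
    · exact Or.inl h
    · exact Or.inr ⟨z, hz, h.symm⟩
  · rintro (h | ⟨z, hz, h⟩)
    · exact Or.inl h
    · exact Or.inr ⟨z, hz, h.symm⟩

lemma gadget_card {B : Finset ℕ} (hB : B.card = 4) : (gadget B).card = 5 := by
  rw [gadget, Finset.card_insert_of_notMem, Finset.card_image_of_injOn]
  · rw [hB]
  · intro a ha b hb hab
    dsimp only at hab
    by_contra hne
    have h3 : a ∈ B.erase b := Finset.mem_erase.2 ⟨hne, Finset.mem_coe.1 ha⟩
    rw [← hab] at h3
    exact (Finset.notMem_erase a B) h3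
  · intro hmem
    obtain ⟨z, hz, h⟩ := Finset.mem_image.1 hmem
    have := Finset.card_erase_of_mem hz
    rw [h] at this
    omega

lemma gadget_subset {B S : Finset ℕ} (h : S ∈ gadget B) : S ⊆ B := by
  rcases mem_gadget.1 h with rfl | ⟨z, hz, rfl⟩
  · exact Finset.Subset.refl _
  · exact Finset.erase_subset _ _

lemma gadget_card_ge {B S : Finset ℕ} (hB : B.card = 4) (h : S ∈ gadget B) : 3 ≤ S.card := by
  rcases mem_gadget.1 h with rfl | ⟨z, hz, rfl⟩
  · omega
  · rw [Finset.card_erase_of_mem hz]; omega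

noncomputable def bigs (n : ℕ) : Finset (Finset ℕ) :=
  (Des n).biUnion (fun B => gadget (B.image (phi n)))

noncomputable def fam (n : ℕ) : Finset (Finset ℕ) := smalls (4 ^ n) ∪ bigs n

end Aux4

section Aux5
variable {n : ℕ}

lemma image_card_four {B : Finset (Vn n)} (hB : B ∈ Des n) : (B.image (phi n)).card = 4 := by
  rw [Finset.card_image_of_injective _ phi_injective, des_card_four hB]

lemma bigs_card : (bigs n).card = 5 * (Des n).card := by
  rw [bigs, Finset.card_biUnion, Finset.sum_congr rfl (fun B hB => gadget_card (image_card_four hB)),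
    Finset.sum_const, smul_eq_mul, mul_comm]
  intro B₁ h₁ B₂ h₂ hne
  simp only [Finset.disjoint_left]
  intro S hS₁ hS₂
  have hsub : S ⊆ (B₁.image (phi n)) ∩ (B₂.image (phi n)) :=
    Finset.subset_inter (gadget_subset hS₁) (gadget_subset hS₂)
  have hint : (B₁.image (phi n)) ∩ (B₂.image (phi n)) = (B₁ ∩ B₂).image (phi n) :=
    (Finset.image_inter _ _ phi_injective).symm
  have hcard : S.card ≤ 1 := by
    calc S.card ≤ ((B₁ ∩ B₂).image (phi n)).card := by rw [← hint]; exact Finset.card_le_card hsub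
      _ ≤ (B₁ ∩ B₂).card := Finset.card_image_le
      _ ≤ 1 := des_inter h₁ h₂ hne
  have := gadget_card_ge (image_card_four h₁) hS₁
  omega

lemma fam_card : (fam n).card = 1 + 4 ^ n + Nat.choose (4 ^ n) 2 + 5 * (Des n).card := by
  rw [fam, Finset.card_union_of_disjoint, smalls_card, bigs_card]
  simp only [Finset.disjoint_left]
  intro S hS₁ hS₂
  obtain ⟨-, hc⟩ := mem_smalls.1 hS₁
  obtain ⟨B, hB, hg⟩ := Finset.mem_biUnion.1 hS₂
  have := gadget_card_ge (image_card_four hB) hg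
  omega

lemma fam_subset_Icc {S : Finset ℕ} (hS : S ∈ fam n) : S ⊆ Finset.Icc 1 (4 ^ n) := by
  rcases Finset.mem_union.1 hS with h | h
  · exact (mem_smalls.1 h).1
  · obtain ⟨B, hB, hg⟩ := Finset.mem_biUnion.1 h
    refine (gadget_subset hg).trans ?_
    intro u hu
    obtain ⟨v, -, rfl⟩ := Finset.mem_image.1 hu
    exact phi_mem_Icc v

lemma des_unique_nat {B₁ B₂ : Finset (Vn n)} (h₁ : B₁ ∈ Des n) (h₂ : B₂ ∈ Des n)
    {x y : ℕ} (hxy : x ≠ y)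
    (hx₁ : x ∈ B₁.image (phi n)) (hy₁ : y ∈ B₁.image (phi n))
    (hx₂ : x ∈ B₂.image (phi n)) (hy₂ : y ∈ B₂.image (phi n)) : B₁ = B₂ := by
  obtain ⟨p₁, hp₁, hpx₁⟩ := Finset.mem_image.1 hx₁
  obtain ⟨p₂, hp₂, hpx₂⟩ := Finset.mem_image.1 hx₂
  obtain ⟨q₁, hq₁, hqy₁⟩ := Finset.mem_image.1 hy₁
  obtain ⟨q₂, hq₂, hqy₂⟩ := Finset.mem_image.1 hy₂
  have hpp : p₁ = p₂ := phi_injective (by rw [hpx₁, hpx₂])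
  have hqq : q₁ = q₂ := phi_injective (by rw [hqy₁, hqy₂])
  have hpq : p₁ ≠ q₁ := by
    intro h; apply hxy; rw [← hpx₁, ← hqy₁, h]
  rw [des_block_eq h₁ hp₁ hq₁ hpq, des_block_eq h₂ (hpp ▸ hp₂) (hqq ▸ hq₂) hpq]

lemma fam_pair_classify {x y : ℕ} (hxy : x ≠ y) {S : Finset ℕ} (hS : S ∈ fam n)
    (hx : x ∈ S) (hy : y ∈ S) :
    S = {x, y} ∨ ∃ B ∈ Des n, x ∈ B.image (phi n) ∧ y ∈ B.image (phi n) ∧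
      S ∈ gadget (B.image (phi n)) := by
  rcases Finset.mem_union.1 hS with h | h
  · left
    obtain ⟨-, hc⟩ := mem_smalls.1 h
    have hsub : ({x, y} : Finset ℕ) ⊆ S := by
      intro u hu; rcases Finset.mem_insert.1 hu with rfl | hu
      · exact hx
      · rw [Finset.mem_singleton.1 hu]; exact hy
    have hcxy : ({x, y} : Finset ℕ).card = 2 := Finset.card_pair hxy
    exact (Finset.eq_of_subset_of_card_le hsub (by omega)).symm
  · right
    obtain ⟨B, hB, hg⟩ := Finset.mem_biUnion.1 h
    exact ⟨B, hB, gadget_subset hg hx, gadget_subset hg hy, hg⟩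

end Aux5

section Aux6
variable {n : ℕ}

lemma fam_no_F0 : ¬ ContainsF0 (4 ^ n) (fam n) := by
  rintro ⟨x, hxI, y, hyI, z, hzI, hxy, hxz, hyz,
    S₁, hS₁, S₂, hS₂, S₃, hS₃, S₄, hS₄,
    h12, h13, h14, h23, h24, h34,
    ⟨hx1, hx2, hx3, hx4⟩, ⟨hy1, hy2, hy3, hy4⟩, hsum⟩
  have c₁ := fam_pair_classify hxy hS₁ hx1 hy1
  have c₂ := fam_pair_classify hxy hS₂ hx2 hy2
  -- find a common block
  have hEx : ∃ B ∈ Des n, x ∈ B.image (phi n) ∧ y ∈ B.image (phi n) := by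
    rcases c₁ with h1 | ⟨B, hB, hxB, hyB, -⟩
    · rcases c₂ with h2 | ⟨B, hB, hxB, hyB, -⟩
      · exact absurd (h1.trans h2.symm) h12
      · exact ⟨B, hB, hxB, hyB⟩
    · exact ⟨B, hB, hxB, hyB⟩
  obtain ⟨B, hB, hxB, hyB⟩ := hEx
  set B' : Finset ℕ := B.image (phi n) with hB'def
  have hB4 : B'.card = 4 := image_card_four hB
  have hxysub : ({x, y} : Finset ℕ) ⊆ B' := by
    intro u hu; rcases Finset.mem_insert.1 hu with rfl | hu
    · exact hxB
    · rw [Finset.mem_singleton.1 hu]; exact hyB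
  have hRcard : (B' \ {x, y}).card = 2 := by
    rw [Finset.card_sdiff_of_subset hxysub, hB4, Finset.card_pair hxy]
  obtain ⟨u, v, huv, hR⟩ := Finset.card_eq_two.1 hRcard
  have hu : u ∈ B' \ {x, y} := by rw [hR]; exact Finset.mem_insert_self _ _
  have hv : v ∈ B' \ {x, y} := by rw [hR]; simp
  have huB : u ∈ B' := (Finset.mem_sdiff.1 hu).1
  have hvB : v ∈ B' := (Finset.mem_sdiff.1 hv).1
  have hux : u ≠ x := by have := (Finset.mem_sdiff.1 hu).2; simp at this; exact fun h => this.1 h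
  have huy : u ≠ y := by have := (Finset.mem_sdiff.1 hu).2; simp at this; exact fun h => this.2 h
  have hvx : v ≠ x := by have := (Finset.mem_sdiff.1 hv).2; simp at this; exact fun h => this.1 h
  have hvy : v ≠ y := by have := (Finset.mem_sdiff.1 hv).2; simp at this; exact fun h => this.2 h
  set C : Finset (Finset ℕ) :=
    insert ({x, y} : Finset ℕ) (insert B' (insert (B'.erase u) {B'.erase v})) with hCdef
  -- every member of the family containing x and y lies in C
  have hmemC : ∀ S ∈ fam n, x ∈ S → y ∈ S → S ∈ C := by
    intro S hS hxS hyS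
    rcases fam_pair_classify hxy hS hxS hyS with rfl | ⟨B₂, hB₂, hxB₂, hyB₂, hg⟩
    · exact Finset.mem_insert_self _ _
    · have hBB : B₂ = B := des_unique_nat hB₂ hB hxy hxB₂ hyB₂ hxB hyB
      rw [hBB] at hg
      rcases mem_gadget.1 hg with rfl | ⟨w, hw, rfl⟩
      · exact Finset.mem_insert_of_mem (Finset.mem_insert_self _ _)
      · have hwx : w ≠ x := fun h => (Finset.notMem_erase w B') (h ▸ hxS)
        have hwy : w ≠ y := fun h => (Finset.notMem_erase w B') (h ▸ hyS)
        have hwR : w ∈ B' \ {x, y} := Finset.mem_sdiff.2 ⟨hw, by simp [hwx, hwy]⟩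
        rw [hR] at hwR
        rcases Finset.mem_insert.1 hwR with rfl | hwv
        · exact Finset.mem_insert_of_mem (Finset.mem_insert_of_mem (Finset.mem_insert_self _ _))
        · rw [Finset.mem_singleton.1 hwv]
          exact Finset.mem_insert_of_mem (Finset.mem_insert_of_mem (Finset.mem_insert_of_mem (Finset.mem_singleton_self _)))
  set T : Finset (Finset ℕ) := insert S₁ (insert S₂ (insert S₃ {S₄})) with hTdef
  have hTsub : T ⊆ C := by
    intro S hS
    rcases Finset.mem_insert.1 hS with rfl | hS
    · exact hmemC _ hS₁ hx1 hy1
    rcases Finset.mem_insert.1 hS with rfl | hS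
    · exact hmemC _ hS₂ hx2 hy2
    rcases Finset.mem_insert.1 hS with rfl | hS
    · exact hmemC _ hS₃ hx3 hy3
    rw [Finset.mem_singleton.1 hS]
    exact hmemC _ hS₄ hx4 hy4
  have hTcard : T.card = 4 := by
    rw [hTdef, Finset.card_insert_of_notMem (by simp [h12, h13, h14]),
      Finset.card_insert_of_notMem (by simp [h23, h24]),
      Finset.card_insert_of_notMem (by simp [h34]), Finset.card_singleton]
  have hCcard : C.card ≤ 4 := by
    refine (Finset.card_insert_le _ _).trans (Nat.succ_le_succ ?_)
    refine (Finset.card_insert_le _ _).trans (Nat.succ_le_succ ?_)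
    refine (Finset.card_insert_le _ _).trans (Nat.succ_le_succ ?_)
    simp
  have hTC : T = C := Finset.eq_of_subset_of_card_le hTsub (by omega)
  -- distinctness of the four candidate sets
  have hc_xy_B : ({x, y} : Finset ℕ) ≠ B' := by
    intro h; have := congrArg Finset.card h; rw [Finset.card_pair hxy, hB4] at this; omega
  have hcu : (B'.erase u).card = 3 := by rw [Finset.card_erase_of_mem huB, hB4]
  have hcv : (B'.erase v).card = 3 := by rw [Finset.card_erase_of_mem hvB, hB4]
  have hc_xy_eu : ({x, y} : Finset ℕ) ≠ B'.erase u := by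
    intro h; have := congrArg Finset.card h; rw [Finset.card_pair hxy, hcu] at this; omega
  have hc_xy_ev : ({x, y} : Finset ℕ) ≠ B'.erase v := by
    intro h; have := congrArg Finset.card h; rw [Finset.card_pair hxy, hcv] at this; omega
  have hc_B_eu : B' ≠ B'.erase u := by
    intro h; have := congrArg Finset.card h; rw [hB4, hcu] at this; omega
  have hc_B_ev : B' ≠ B'.erase v := by
    intro h; have := congrArg Finset.card h; rw [hB4, hcv] at this; omega
  have hc_eu_ev : B'.erase u ≠ B'.erase v := by
    intro h
    have h1 : u ∈ B'.erase v := Finset.mem_erase.2 ⟨huv, huB⟩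
    rw [← h] at h1
    exact (Finset.notMem_erase u B') h1
  -- sum over T equals sum over C
  have hsumT : ∑ S ∈ T, (if z ∈ S then 1 else 0) =
      (if z ∈ S₁ then 1 else 0) + (if z ∈ S₂ then 1 else 0)
        + (if z ∈ S₃ then 1 else 0) + (if z ∈ S₄ then 1 else 0) := by
    rw [hTdef, Finset.sum_insert (by simp [h12, h13, h14]),
      Finset.sum_insert (by simp [h23, h24]),
      Finset.sum_insert (by simp [h34]), Finset.sum_singleton]
    ring
  have hsumC : ∑ S ∈ C, (if z ∈ S then 1 else 0) =
      (if z ∈ ({x, y} : Finset ℕ) then 1 else 0) + (if z ∈ B' then 1 else 0)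
        + (if z ∈ B'.erase u then 1 else 0) + (if z ∈ B'.erase v then 1 else 0) := by
    rw [hCdef, Finset.sum_insert (by simp [hc_xy_B, hc_xy_eu, hc_xy_ev]),
      Finset.sum_insert (by simp [hc_B_eu, hc_B_ev]),
      Finset.sum_insert (by simp [hc_eu_ev]), Finset.sum_singleton]
    ring
  have hzxy : z ∉ ({x, y} : Finset ℕ) := by simp [Ne.symm hxz, Ne.symm hyz]
  have heq : (if z ∈ ({x, y} : Finset ℕ) then 1 else 0) + (if z ∈ B' then 1 else 0)
      + (if z ∈ B'.erase u then 1 else 0) + (if z ∈ B'.erase v then 1 else 0) = 1 := by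
    rw [← hsumC, ← hTC, hsumT, hsum]
  rw [if_neg hzxy] at heq
  by_cases hzB : z ∈ B'
  · have hzR : z ∈ B' \ {x, y} := Finset.mem_sdiff.2 ⟨hzB, hzxy⟩
    rw [hR] at hzR
    rcases Finset.mem_insert.1 hzR with rfl | hzv
    · rw [if_pos hzB, if_neg (Finset.notMem_erase _ _),
        if_pos (Finset.mem_erase.2 ⟨huv, huB⟩)] at heq
      omega
    · obtain rfl : z = v := Finset.mem_singleton.1 hzv
      rw [if_pos hzB, if_pos (Finset.mem_erase.2 ⟨Ne.symm huv, hvB⟩),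
        if_neg (Finset.notMem_erase _ _)] at heq
      omega
  · rw [if_neg hzB, if_neg (fun h => hzB (Finset.mem_of_mem_erase h)),
      if_neg (fun h => hzB (Finset.mem_of_mem_erase h))] at heq
    omega

end Aux6


/-- for every k ≥ 1 there is m ≤ 64k+1 and a family of distinct subsets
of [m] with no configuration F₀ and size at least (5/3)·C(m,2) + C(m,1) + C(m,0) + k. -/
theorem stmt_2 (k : ℕ) (hk : 1 ≤ k) :
    ∃ m : ℕ, m ≤ 64 * k + 1 ∧
      ∃ 𝒜 : Finset (Finset ℕ),
        (∀ S ∈ 𝒜, S ⊆ Finset.Icc 1 m) ∧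
        ¬ ContainsF0 m 𝒜 ∧
        5 * Nat.choose m 2 + 3 * (m + 1 + k) ≤ 3 * 𝒜.card := by
  set n := Nat.clog 4 (4 * k) with hn
  have h4k : 1 < 4 * k := by omega
  have hml : 4 * k ≤ 4 ^ n := Nat.le_pow_clog (by norm_num) _
  have hn1 : 1 ≤ n := by
    by_contra h
    push_neg at h
    interval_cases n
    · simp at hml; omega
  have hupper : 4 ^ n ≤ 64 * k + 1 := by
    have hlt : 4 ^ (n - 1) < 4 * k := Nat.pow_pred_clog_lt_self (by norm_num) h4k
    have : 4 ^ n = 4 * 4 ^ (n - 1) := by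
      conv_lhs => rw [show n = (n - 1) + 1 by omega]
      ring
    omega
  refine ⟨4 ^ n, hupper, fam n, fun S hS => fam_subset_Icc hS, fam_no_F0, ?_⟩
  have hD := des_card_lb (n := n)
  have hM4 : 4 ≤ 4 ^ n := by omega
  have h2dvd : 2 ∣ 4 ^ n * (4 ^ n - 1) := by
    rcases Nat.even_or_odd (4 ^ n) with he | ho
    · exact Dvd.dvd.mul_right he.two_dvd _
    · have : Even (4 ^ n - 1) := Nat.Odd.sub_odd ho odd_one
      exact Dvd.dvd.mul_left this.two_dvd _
  have hch : 2 * Nat.choose (4 ^ n) 2 = 4 ^ n * (4 ^ n - 1) := by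
    rw [Nat.choose_two_right, Nat.mul_div_cancel' h2dvd]
  have h12k : 12 * k ≤ 4 ^ n * (4 ^ n - 1) := by
    calc 12 * k = (4 * k) * 3 := by ring
      _ ≤ 4 ^ n * (4 ^ n - 1) := Nat.mul_le_mul hml (by omega)
  rw [fam_card]
  set D := (Des n).card
  set M := (4 : ℕ) ^ n
  set P := M * (M - 1)
  set Ch := Nat.choose M 2
  linarith [hD, hch, h12k]
end

section
/- For all integers k, n with 1 ≤ k ≤ n, there exists a subgraph G of the complete 4-partite graph K_{n,n,n,n} (with four parts each of size n) such that G has at least 4n² + (k−1)n edges and G contains no k pairwise vertex-disjoint triangles. -/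
/-- The complete 4-partite graph `K_{n,n,n,n}`: vertices are pairs (part, index),
two vertices adjacent iff they lie in different parts. -/
def K4n (n : ℕ) : SimpleGraph (Fin 4 × Fin n) where
  Adj v w := v.1 ≠ w.1
  symm := ⟨fun _ _ h => Ne.symm h⟩
  loopless := ⟨fun _ h => h rfl⟩

/-- The extremal graph: complete bipartite between parts {0,1} and parts {2,3},
plus all edges from the first `c` vertices of part 0 to part 1. -/
def myG (c n : ℕ) : SimpleGraph (Fin 4 × Fin n) where
  Adj v w := (v.1.val ≤ 1 ∧ 2 ≤ w.1.val) ∨ (w.1.val ≤ 1 ∧ 2 ≤ v.1.val) ∨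
    (v.1.val = 0 ∧ w.1.val = 1 ∧ v.2.val < c) ∨ (w.1.val = 0 ∧ v.1.val = 1 ∧ w.2.val < c)
  symm := ⟨by intro v w h; omega⟩
  loopless := ⟨by intro v h; omega⟩

/-- for 1 ≤ k ≤ n there is a subgraph of K_{n,n,n,n} with at least
4n² + (k−1)n edges and no k pairwise vertex-disjoint triangles. -/
theorem stmt_4 (k n : ℕ) (hk : 1 ≤ k) (hkn : k ≤ n) :
    ∃ G : SimpleGraph (Fin 4 × Fin n), G ≤ K4n n ∧
      4 * n ^ 2 + (k - 1) * n ≤ G.edgeSet.ncard ∧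
      ¬ ∃ T : Fin k → Finset (Fin 4 × Fin n),
          (∀ i, G.IsNClique 3 (T i)) ∧
          (∀ i j, i ≠ j → Disjoint (T i) (T j)) := by
  set c := k - 1 with hc
  have hcn : c ≤ n := by omega
  refine ⟨myG c n, ?_, ?_, ?_⟩
  · intro v w h
    have : v.1.val ≠ w.1.val := by
      simp only [myG] at h; omega
    exact fun e => this (congrArg Fin.val e)
  · -- edge count
    classical
    set f : (Fin 2 × Fin 2 × Fin n × Fin n) → Sym2 (Fin 4 × Fin n) :=
      fun p => s(((⟨p.1.val, by omega⟩ : Fin 4), p.2.2.1),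
                 ((⟨p.2.1.val + 2, by omega⟩ : Fin 4), p.2.2.2)) with hf
    set g : (Fin c × Fin n) → Sym2 (Fin 4 × Fin n) :=
      fun p => s(((⟨0, by omega⟩ : Fin 4), (⟨p.1.val, by omega⟩ : Fin n)),
                 ((⟨1, by omega⟩ : Fin 4), p.2)) with hg
    have hfi : Function.Injective f := by
      intro p q h
      simp only [hf, Sym2.eq_iff] at h
      rcases h with ⟨h1, h2⟩ | ⟨h1, h2⟩
      · obtain ⟨a1, b1, i1, j1⟩ := p
        obtain ⟨a2, b2, i2, j2⟩ := q
        simp only [Prod.mk.injEq, Fin.mk.injEq] at h1 h2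
        obtain ⟨ha, hi⟩ := h1
        obtain ⟨hb, hj⟩ := h2
        simp_all [Prod.ext_iff, Fin.ext_iff]
      · exfalso
        have := congrArg (fun x : Fin 4 × Fin n => x.1.val) h1
        simp at this
        omega
    have hgi : Function.Injective g := by
      intro p q h
      simp only [hg, Sym2.eq_iff] at h
      rcases h with ⟨h1, h2⟩ | ⟨h1, h2⟩
      · obtain ⟨i1, j1⟩ := p
        obtain ⟨i2, j2⟩ := q
        simp only [Prod.mk.injEq, Fin.mk.injEq] at h1 h2
        simp_all [Prod.ext_iff, Fin.ext_iff]
      · exfalso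
        have := congrArg (fun x : Fin 4 × Fin n => x.1.val) h1
        simp at this
    set E1 : Finset (Sym2 (Fin 4 × Fin n)) := Finset.image f Finset.univ with hE1
    set E2 : Finset (Sym2 (Fin 4 × Fin n)) := Finset.image g Finset.univ with hE2
    have hcard1 : E1.card = 4 * n ^ 2 := by
      rw [hE1, Finset.card_image_of_injective _ hfi]
      simp [Fintype.card_prod]
      ring
    have hcard2 : E2.card = c * n := by
      rw [hE2, Finset.card_image_of_injective _ hgi]
      simp [Fintype.card_prod]
    have hdisj : Disjoint E1 E2 := by
      rw [Finset.disjoint_left]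
      intro e he1 he2
      simp only [hE1, hE2, Finset.mem_image, Finset.mem_univ, true_and] at he1 he2
      obtain ⟨p, hp⟩ := he1
      obtain ⟨q, hq⟩ := he2
      rw [← hq] at hp
      simp only [hf, hg, Sym2.eq_iff] at hp
      rcases hp with ⟨h1, h2⟩ | ⟨h1, h2⟩ <;>
      · have := congrArg (fun x : Fin 4 × Fin n => x.1.val) h2
        simp at this
    have hsub : E1 ∪ E2 ⊆ (myG c n).edgeFinset := by
      intro e he
      rw [SimpleGraph.mem_edgeFinset]
      rcases Finset.mem_union.mp he with h | h
      · simp only [hE1, Finset.mem_image, Finset.mem_univ, true_and] at h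
        obtain ⟨p, hp⟩ := h
        rw [← hp, hf]
        rw [SimpleGraph.mem_edgeSet]
        show _ ∨ _ ∨ _ ∨ _
        left
        constructor <;> simp <;> omega
      · simp only [hE2, Finset.mem_image, Finset.mem_univ, true_and] at h
        obtain ⟨p, hp⟩ := h
        rw [← hp, hg]
        rw [SimpleGraph.mem_edgeSet]
        show _ ∨ _ ∨ _ ∨ _
        right; right; left
        refine ⟨rfl, rfl, ?_⟩
        simpa using p.1.isLt
    have := Finset.card_le_card hsub
    rw [Finset.card_union_of_disjoint hdisj, hcard1, hcard2] at this
    have hn : (myG c n).edgeSet.ncard = (myG c n).edgeFinset.card := by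
      rw [SimpleGraph.edgeFinset, Set.ncard_eq_toFinset_card']
    omega
  · -- no k disjoint triangles
    rintro ⟨T, hT, hTd⟩
    -- each triangle contains a special vertex (part 0, index < c)
    have key : ∀ i : Fin k, ∃ v ∈ T i, v.1.val = 0 ∧ v.2.val < c := by
      intro i
      obtain ⟨hcl, hcard⟩ := hT i
      rw [Finset.card_eq_three] at hcard
      obtain ⟨a, b, d, hab, had, hbd, habd⟩ := hcard
      have hma : a ∈ T i := by rw [habd]; simp
      have hmb : b ∈ T i := by rw [habd]; simp
      have hmd : d ∈ T i := by rw [habd]; simp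
      have Aab : (myG c n).Adj a b := hcl hma hmb hab
      have Aad : (myG c n).Adj a d := hcl hma hmd had
      have Abd : (myG c n).Adj b d := hcl hmb hmd hbd
      -- two of a,b,d lie on the same side of the bipartition
      simp only [myG] at Aab Aad Abd
      by_cases h1 : a.1.val ≤ 1 <;> by_cases h2 : b.1.val ≤ 1 <;> by_cases h3 : d.1.val ≤ 1
      · rcases Aab with h | h | h | h
        · omega
        · omega
        · exact ⟨a, hma, h.1, h.2.2⟩
        · exact ⟨b, hmb, h.1, h.2.2⟩
      · rcases Aab with h | h | h | h
        · omega
        · omega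
        · exact ⟨a, hma, h.1, h.2.2⟩
        · exact ⟨b, hmb, h.1, h.2.2⟩
      · rcases Aad with h | h | h | h
        · omega
        · omega
        · exact ⟨a, hma, h.1, h.2.2⟩
        · exact ⟨d, hmd, h.1, h.2.2⟩
      · rcases Abd with h | h | h | h
        · omega
        · omega
        · exact ⟨b, hmb, h.1, h.2.2⟩
        · exact ⟨d, hmd, h.1, h.2.2⟩
      · rcases Abd with h | h | h | h
        · omega
        · omega
        · exact ⟨b, hmb, h.1, h.2.2⟩
        · exact ⟨d, hmd, h.1, h.2.2⟩
      · rcases Aad with h | h | h | h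
        · omega
        · omega
        · exact ⟨a, hma, h.1, h.2.2⟩
        · exact ⟨d, hmd, h.1, h.2.2⟩
      · rcases Aab with h | h | h | h
        · omega
        · omega
        · exact ⟨a, hma, h.1, h.2.2⟩
        · exact ⟨b, hmb, h.1, h.2.2⟩
      · rcases Aab with h | h | h | h
        · omega
        · omega
        · exact ⟨a, hma, h.1, h.2.2⟩
        · exact ⟨b, hmb, h.1, h.2.2⟩
    choose v hv h0 hlt using key
    have hinj : Function.Injective (fun i : Fin k => (⟨(v i).2.val, hlt i⟩ : Fin c)) := by
      intro i j h
      by_contra hne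
      have hd := hTd i j hne
      have : v i = v j := by
        have h2 : (v i).2 = (v j).2 := by
          apply Fin.ext
          simpa [Fin.ext_iff] using h
        have h1 : (v i).1 = (v j).1 := by
          apply Fin.ext
          rw [h0 i, h0 j]
        exact Prod.ext h1 h2
      exact (Finset.disjoint_left.mp hd (hv i)) (this ▸ hv j)
    have := Fintype.card_le_of_injective _ hinj
    simp at this
    omega
end

section
/- For every integer n ≥ 2, the family F = {A ⊆ [n] : |A| = 2} ∪ {A ⊆ [n] : |A| = 3 and 1 ∈ A} of subsets of [n] = {1,...,n} contains no 3-chain, has diameter at most 5, and has size |F| = C(n,2) + C(n−1,2) = (n−1)². -/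
/-- The family F = {A ⊆ [n] : |A| = 2} ∪ {A ⊆ [n] : |A| = 3, 1 ∈ A}. -/
def F6 (n : ℕ) : Finset (Finset ℕ) :=
  ((Finset.Icc 1 n).powerset.filter (fun A => A.card = 2)) ∪
  ((Finset.Icc 1 n).powerset.filter (fun A => A.card = 3 ∧ 1 ∈ A))

lemma F6_mem {n : ℕ} {A : Finset ℕ} (h : A ∈ F6 n) :
    A ⊆ Finset.Icc 1 n ∧ (A.card = 2 ∨ (A.card = 3 ∧ 1 ∈ A)) := by
  simp only [F6, Finset.mem_union, Finset.mem_filter, Finset.mem_powerset] at h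
  tauto

lemma choose_sum (m : ℕ) : Nat.choose (m + 2) 2 + Nat.choose (m + 1) 2 = (m + 1) ^ 2 := by
  induction m with
  | zero => rfl
  | succ k ih =>
    have h1 : (k+1+2).choose 2 = (k+1+1).choose 1 + (k+1+1).choose 2 := Nat.choose_succ_succ _ _
    have h2 : (k+1+1).choose 2 = (k+1).choose 1 + (k+1).choose 2 := Nat.choose_succ_succ _ _
    have h3 : (k+2).choose 2 = (k+1).choose 1 + (k+1).choose 2 := Nat.choose_succ_succ _ _
    have e : (k+1+1)^2 = (k+1)^2 + (2*k+3) := by ring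
    rw [h3, Nat.choose_one_right] at ih
    rw [h1, h2, Nat.choose_one_right, Nat.choose_one_right, e]
    generalize (k+1).choose 2 = c at ih ⊢
    generalize (k+1)^2 = s at ih ⊢
    omega

/-- for n ≥ 2, F6 n has no 3-chain, diameter at most 5, and size
C(n,2) + C(n−1,2) = (n−1)². -/
theorem stmt_6 (n : ℕ) (hn : 2 ≤ n) :
    (¬ ∃ A ∈ F6 n, ∃ B ∈ F6 n, ∃ C ∈ F6 n, A ⊂ B ∧ B ⊂ C) ∧
    (∀ A ∈ F6 n, ∀ B ∈ F6 n, ((A \ B) ∪ (B \ A)).card ≤ 5) ∧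
    (F6 n).card = Nat.choose n 2 + Nat.choose (n - 1) 2 ∧
    (F6 n).card = (n - 1) ^ 2 := by
  have hchains : ¬ ∃ A ∈ F6 n, ∃ B ∈ F6 n, ∃ C ∈ F6 n, A ⊂ B ∧ B ⊂ C := by
    rintro ⟨A, hA, B, hB, C, hC, hAB, hBC⟩
    have h1 := Finset.card_lt_card hAB
    have h2 := Finset.card_lt_card hBC
    have := (F6_mem hA).2
    have := (F6_mem hB).2
    have := (F6_mem hC).2
    omega
  have hdiam : ∀ A ∈ F6 n, ∀ B ∈ F6 n, ((A \ B) ∪ (B \ A)).card ≤ 5 := by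
    intro A hA B hB
    have hA' := (F6_mem hA).2
    have hB' := (F6_mem hB).2
    have hsub : (A \ B) ∪ (B \ A) ⊆ A ∪ B := by
      intro x hx
      simp only [Finset.mem_union, Finset.mem_sdiff] at hx ⊢
      tauto
    have hle := Finset.card_le_card hsub
    rcases hA' with h2 | ⟨h3, h1A⟩
    · have := Finset.card_union_le A B
      omega
    · rcases hB' with h2' | ⟨h3', h1B⟩
      · have := Finset.card_union_le A B
        omega
      · have h1u : 1 ∈ A ∩ B := Finset.mem_inter.2 ⟨h1A, h1B⟩
        have hcap : 1 ≤ (A ∩ B).card := Finset.card_pos.2 ⟨1, h1u⟩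
        have := Finset.card_union_add_card_inter A B
        omega
  have hicc : (Finset.Icc 1 n).card = n := by
    rw [Nat.card_Icc]; omega
  have hicc2 : (Finset.Icc 2 n).card = n - 1 := by
    rw [Nat.card_Icc]; omega
  have hcard1 : ((Finset.Icc 1 n).powerset.filter (fun A => A.card = 2)).card
      = Nat.choose n 2 := by
    rw [← Finset.powersetCard_eq_filter, Finset.card_powersetCard, hicc]
  have hcard2 : ((Finset.Icc 1 n).powerset.filter (fun A => A.card = 3 ∧ 1 ∈ A)).card
      = Nat.choose (n - 1) 2 := by
    rw [← hicc2, ← Finset.card_powersetCard]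
    apply Finset.card_bij (fun A _ => A.erase 1)
    · intro A hA
      simp only [Finset.mem_filter, Finset.mem_powerset] at hA
      obtain ⟨hsub, hc, h1⟩ := hA
      rw [Finset.mem_powersetCard]
      constructor
      · intro x hx
        have hx' := Finset.mem_of_mem_erase hx
        have := hsub hx'
        rw [Finset.mem_Icc] at *
        have hne := Finset.ne_of_mem_erase hx
        omega
      · rw [Finset.card_erase_of_mem h1, hc]
    · intro A hA B hB h
      simp only [Finset.mem_filter] at hA hB
      have h1A := hA.2.2
      have h1B := hB.2.2
      have := congrArg (insert 1) h
      rwa [Finset.insert_erase h1A, Finset.insert_erase h1B] at this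
    · intro B hB
      rw [Finset.mem_powersetCard] at hB
      obtain ⟨hsub, hc⟩ := hB
      have h1B : 1 ∉ B := by
        intro h
        have := hsub h
        rw [Finset.mem_Icc] at this
        omega
      refine ⟨insert 1 B, ?_, ?_⟩
      · simp only [Finset.mem_filter, Finset.mem_powerset]
        refine ⟨?_, ?_, Finset.mem_insert_self 1 B⟩
        · intro x hx
          rcases Finset.mem_insert.1 hx with rfl | hx
          · rw [Finset.mem_Icc]; omega
          · have := hsub hx
            rw [Finset.mem_Icc] at *
            omega
        · rw [Finset.card_insert_of_notMem h1B, hc]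
      · rw [Finset.erase_insert h1B]
  have hdisj : Disjoint ((Finset.Icc 1 n).powerset.filter (fun A => A.card = 2))
      ((Finset.Icc 1 n).powerset.filter (fun A => A.card = 3 ∧ 1 ∈ A)) := by
    rw [Finset.disjoint_left]
    intro A h1 h2
    simp only [Finset.mem_filter] at h1 h2
    omega
  have hcard : (F6 n).card = Nat.choose n 2 + Nat.choose (n - 1) 2 := by
    rw [F6, Finset.card_union_of_disjoint hdisj, hcard1, hcard2]
  refine ⟨hchains, hdiam, hcard, ?_⟩
  rw [hcard]
  obtain ⟨m, rfl⟩ : ∃ m, n = m + 2 := ⟨n - 2, by omega⟩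
  have := choose_sum m
  simpa using this
end

section
/- The family F = {A ⊆ [9] : |A| = 3} ∪ {A ⊆ [9] : |A| = 4 and 1 ∈ A} ∪ {{2,3,4,5,6,7,8,9}} of subsets of [9] = {1,...,9} contains no 3-chain, has diameter at most 7, and has size |F| = C(9,3) + C(8,3) + 1 = 141. -/
/-- The family F = {A ⊆ [9] : |A| = 3} ∪ {A ⊆ [9] : |A| = 4, 1 ∈ A} ∪ {{2,…,9}}. -/
def F8 : Finset (Finset ℕ) :=
  ((Finset.Icc 1 9).powerset.filter (fun A => A.card = 3)) ∪
  ((Finset.Icc 1 9).powerset.filter (fun A => A.card = 4 ∧ 1 ∈ A)) ∪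
  {({2, 3, 4, 5, 6, 7, 8, 9} : Finset ℕ)}

def E8 : Finset ℕ := {2, 3, 4, 5, 6, 7, 8, 9}

lemma memF8 {A : Finset ℕ} (hA : A ∈ F8) :
    (A ⊆ Finset.Icc 1 9 ∧ A.card = 3) ∨
    (A ⊆ Finset.Icc 1 9 ∧ A.card = 4 ∧ 1 ∈ A) ∨
    (A.card = 8 ∧ A = E8) := by
  simp only [F8, Finset.mem_union, Finset.mem_filter, Finset.mem_powerset,
    Finset.mem_singleton] at hA
  rcases hA with (h | h) | h
  · exact Or.inl ⟨h.1, h.2⟩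
  · exact Or.inr (Or.inl ⟨h.1, h.2.1, h.2.2⟩)
  · refine Or.inr (Or.inr ⟨?_, h⟩)
    rw [h]; decide

lemma one_not_E8 : (1 : ℕ) ∉ E8 := by decide

lemma diam_small_E {A : Finset ℕ} (hsub : A ⊆ Finset.Icc 1 9) (hc : 3 ≤ A.card) :
    ((A \ E8) ∪ (E8 \ A)).card ≤ 7 := by
  have h1 : A \ E8 ⊆ {1} := by
    intro x hx
    rw [Finset.mem_sdiff] at hx
    have hx1 := hsub hx.1
    rw [Finset.mem_Icc] at hx1
    have hx2 := hx.2
    simp only [E8, Finset.mem_insert, Finset.mem_singleton] at hx2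
    push_neg at hx2
    simp only [Finset.mem_singleton]
    omega
  have e3 : (A \ E8).card ≤ 1 := by
    calc (A \ E8).card ≤ ({1} : Finset ℕ).card := Finset.card_le_card h1
    _ = 1 := rfl
  have e1 : (A \ E8).card + (A ∩ E8).card = A.card := Finset.card_sdiff_add_card_inter A E8
  have e2 : (E8 \ A).card + (E8 ∩ A).card = E8.card := Finset.card_sdiff_add_card_inter E8 A
  have e4 : (E8 ∩ A).card = (A ∩ E8).card := by rw [Finset.inter_comm]
  have e5 : E8.card = 8 := by decide
  have := Finset.card_union_le (A \ E8) (E8 \ A)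
  omega

lemma diam_pair {A B : Finset ℕ} (hA : A ∈ F8) (hB : B ∈ F8) :
    ((A \ B) ∪ (B \ A)).card ≤ 7 := by
  have hub := Finset.card_union_le (A \ B) (B \ A)
  have hsA : (A \ B).card ≤ A.card := Finset.card_le_card Finset.sdiff_subset
  have hsB : (B \ A).card ≤ B.card := Finset.card_le_card Finset.sdiff_subset
  rcases memF8 hA with ⟨hAs, hA3⟩ | ⟨hAs, hA4, h1A⟩ | ⟨hA8, hAE⟩ <;>
    rcases memF8 hB with ⟨hBs, hB3⟩ | ⟨hBs, hB4, h1B⟩ | ⟨hB8, hBE⟩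
  · omega
  · omega
  · subst hBE; exact diam_small_E hAs (by omega)
  · omega
  · -- both card 4 containing 1
    have hA' : A \ B ⊆ A.erase 1 := by
      intro x hx
      rw [Finset.mem_sdiff] at hx
      rw [Finset.mem_erase]
      exact ⟨fun h => hx.2 (h ▸ h1B), hx.1⟩
    have hB' : B \ A ⊆ B.erase 1 := by
      intro x hx
      rw [Finset.mem_sdiff] at hx
      rw [Finset.mem_erase]
      exact ⟨fun h => hx.2 (h ▸ h1A), hx.1⟩
    have cA' : (A.erase 1).card = 3 := by rw [Finset.card_erase_of_mem h1A, hA4]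
    have cB' : (B.erase 1).card = 3 := by rw [Finset.card_erase_of_mem h1B, hB4]
    have := Finset.card_le_card hA'
    have := Finset.card_le_card hB'
    omega
  · subst hBE; exact diam_small_E hAs (by omega)
  · subst hAE
    rw [Finset.union_comm]
    exact diam_small_E hBs (by omega)
  · subst hAE
    rw [Finset.union_comm]
    exact diam_small_E hBs (by omega)
  · subst hAE; subst hBE
    simp

set_option maxRecDepth 100000 in
set_option maxHeartbeats 2000000 in
lemma F8_card : F8.card = 141 := by decide

/-- F8 has no 3-chain, diameter at most 7, and size C(9,3)+C(8,3)+1 = 141. -/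
theorem stmt_8 :
    (¬ ∃ A ∈ F8, ∃ B ∈ F8, ∃ C ∈ F8, A ⊂ B ∧ B ⊂ C) ∧
    (∀ A ∈ F8, ∀ B ∈ F8, ((A \ B) ∪ (B \ A)).card ≤ 7) ∧
    F8.card = Nat.choose 9 3 + Nat.choose 8 3 + 1 ∧
    F8.card = 141 := by
  refine ⟨?_, fun A hA B hB => diam_pair hA hB, ?_, F8_card⟩
  · rintro ⟨A, hA, B, hB, C, hC, hAB, hBC⟩
    have cab := Finset.card_lt_card hAB
    have cbc := Finset.card_lt_card hBC
    rcases memF8 hA with ⟨_, hA3⟩ | ⟨_, hA4, _⟩ | ⟨hA8, _⟩ <;>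
      rcases memF8 hB with ⟨_, hB3⟩ | ⟨_, hB4, h1B⟩ | ⟨hB8, _⟩ <;>
      rcases memF8 hC with ⟨_, hC3⟩ | ⟨_, hC4, _⟩ | ⟨hC8, hCE⟩ <;>
      try omega
    exact one_not_E8 (hCE ▸ hBC.subset h1B)
  · rw [F8_card]; rfl
end

section
/- Let d be an odd positive integer and n an integer with n > d. Then the family F = {A ⊆ [n] : |A| = (d−1)/2} ∪ {A ⊆ [n] : |A| = (d+1)/2 and 1 ∈ A} contains no 3-chain, has diameter at most d, and has size |F| = C(n,(d−1)/2) + C(n−1,(d−1)/2). -/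
/-- for odd d > 0 and n > d, the family
F = {A ⊆ [n] : |A| = (d−1)/2} ∪ {A ⊆ [n] : |A| = (d+1)/2, 1 ∈ A} has no 3-chain,
diameter at most d, and size C(n,(d−1)/2) + C(n−1,(d−1)/2). -/
theorem stmt_9 (d n : ℕ) (hodd : Odd d) (hd : 0 < d) (hn : d < n) :
    let F : Finset (Finset ℕ) :=
      ((Finset.Icc 1 n).powerset.filter (fun A => A.card = (d - 1) / 2)) ∪
      ((Finset.Icc 1 n).powerset.filter (fun A => A.card = (d + 1) / 2 ∧ 1 ∈ A))
    (¬ ∃ A ∈ F, ∃ B ∈ F, ∃ C ∈ F, A ⊂ B ∧ B ⊂ C) ∧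
    (∀ A ∈ F, ∀ B ∈ F, ((A \ B) ∪ (B \ A)).card ≤ d) ∧
    F.card = Nat.choose n ((d - 1) / 2) + Nat.choose (n - 1) ((d - 1) / 2) := by
  obtain ⟨k, hk⟩ := hodd
  have h1 : (d - 1) / 2 = k := by omega
  have h2 : (d + 1) / 2 = k + 1 := by omega
  intro F
  have hmem : ∀ A ∈ F, (A.card = k ∨ (A.card = k + 1 ∧ 1 ∈ A)) := by
    intro A hA
    simp only [F, Finset.mem_union, Finset.mem_filter, h1, h2] at hA
    tauto
  refine ⟨?_, ?_, ?_⟩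
  · rintro ⟨A, hA, B, hB, C, hC, hAB, hBC⟩
    have c1 := Finset.card_lt_card hAB
    have c2 := Finset.card_lt_card hBC
    have := hmem A hA
    have := hmem B hB
    have := hmem C hC
    omega
  · intro A hA B hB
    have hU := Finset.card_union_le (A \ B) (B \ A)
    have hA' := Finset.card_sdiff_add_card_inter A B
    have hB' := Finset.card_sdiff_add_card_inter B A
    rw [Finset.inter_comm B A] at hB'
    rcases hmem A hA with hA1 | ⟨hA1, hA2⟩ <;> rcases hmem B hB with hB1 | ⟨hB1, hB2⟩
    · omega
    · omega
    · omega
    · have h1AB : 1 ∈ A ∩ B := Finset.mem_inter.mpr ⟨hA2, hB2⟩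
      have : 1 ≤ (A ∩ B).card := Finset.card_pos.mpr ⟨1, h1AB⟩
      omega
  · have hdisj : Disjoint
        ((Finset.Icc 1 n).powerset.filter (fun A => A.card = (d - 1) / 2))
        ((Finset.Icc 1 n).powerset.filter (fun A => A.card = (d + 1) / 2 ∧ 1 ∈ A)) := by
      rw [Finset.disjoint_left]
      intro A hA hA'
      simp only [Finset.mem_filter, h1, h2] at hA hA'
      omega
    have hcard1 :
        ((Finset.Icc 1 n).powerset.filter (fun A => A.card = (d - 1) / 2)).card
          = Nat.choose n ((d - 1) / 2) := by
      rw [← Finset.powersetCard_eq_filter, Finset.card_powersetCard, Nat.card_Icc]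
      congr 1
    have hcard2 :
        ((Finset.Icc 1 n).powerset.filter (fun A => A.card = (d + 1) / 2 ∧ 1 ∈ A)).card
          = Nat.choose (n - 1) ((d - 1) / 2) := by
      rw [h1, h2]
      have : Nat.choose (n - 1) k = ((Finset.Icc 2 n).powersetCard k).card := by
        rw [Finset.card_powersetCard, Nat.card_Icc]
        congr 1
      rw [this]
      refine Finset.card_bij' (fun A _ => A.erase 1) (fun B _ => insert 1 B) ?_ ?_ ?_ ?_
      · intro A hA
        simp only [Finset.mem_filter, Finset.mem_powerset] at hA
        obtain ⟨hsub, hcard, h1A⟩ := hA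
        rw [Finset.mem_powersetCard]
        constructor
        · intro x hx
          rw [Finset.mem_erase] at hx
          have := hsub hx.2
          rw [Finset.mem_Icc] at this ⊢
          omega
        · rw [Finset.card_erase_of_mem h1A]; omega
      · intro B hB
        rw [Finset.mem_powersetCard] at hB
        obtain ⟨hsub, hcard⟩ := hB
        have h1B : 1 ∉ B := by
          intro h
          have := hsub h
          rw [Finset.mem_Icc] at this
          omega
        simp only [Finset.mem_filter, Finset.mem_powerset]
        refine ⟨?_, ?_, Finset.mem_insert_self 1 B⟩
        · intro x hx
          rw [Finset.mem_insert] at hx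
          rcases hx with rfl | hx
          · rw [Finset.mem_Icc]; omega
          · have := hsub hx
            rw [Finset.mem_Icc] at this ⊢
            omega
        · rw [Finset.card_insert_of_notMem h1B]; omega
      · intro A hA
        simp only [Finset.mem_filter, Finset.mem_powerset] at hA
        exact Finset.insert_erase hA.2.2
      · intro B hB
        rw [Finset.mem_powersetCard] at hB
        have h1B : 1 ∉ B := by
          intro h
          have := hB.1 h
          rw [Finset.mem_Icc] at this
          omega
        exact Finset.erase_insert h1B
    rw [Finset.card_union_of_disjoint hdisj, hcard1, hcard2]
end

section
/- There exists an intersecting family F of subsets of [9] = {1,...,9} with diversity ρ(F) ≥ 97. In particular, since 97 > Σ_{i=5}^{8} C(8,i) = 93, this disproves Huang's conjecture that every intersecting family F ⊆ 2^[2k+1] satisfies ρ(F) ≤ Σ_{i=k+1}^{2k} C(2k,i), for k = 4. -/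
set_option maxRecDepth 10000

/-- The maximum degree of a family of subsets of [n]. -/
def maxDegree (F : Finset (Finset ℕ)) (n : ℕ) : ℕ :=
  (Finset.Icc 1 n).sup (fun i => (F.filter (fun A => i ∈ A)).card)

/-- The diversity ρ(F) = |F| − Δ(F) of a family of subsets of [n]. -/
def diversity (F : Finset (Finset ℕ)) (n : ℕ) : ℕ := F.card - maxDegree F n

/-- Bitmask encodings of the 256 sets in our family. -/
def masks : List ℕ := [15, 23, 31, 39, 47, 55, 63, 75, 79, 86, 87, 89, 91, 92, 93, 94, 95, 102, 103, 106, 107, 110, 111, 118, 119, 120, 121, 122, 123, 124, 125, 126, 127, 141, 143, 150, 151, 156, 157, 158, 159, 165, 167, 173, 175, 177, 178, 179, 181, 182, 183, 184, 185, 186, 187, 188, 189, 190, 191, 201, 203, 205, 207, 214, 215, 217, 219, 220, 221, 222, 223, 225, 226, 227, 229, 230, 231, 233, 234, 235, 237, 238, 239, 241, 242, 243, 245, 246, 247, 248, 249, 250, 251, 252, 253, 254, 255, 267, 271, 275, 279, 283, 287, 293, 295, 298, 299, 300, 301, 302, 303, 305, 307, 309, 311, 312, 313, 314, 315, 316, 317,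 318, 319, 331, 335, 337, 339, 340, 341, 342, 343, 345, 347, 348, 349, 350, 351, 356, 357, 358, 359, 362, 363, 364, 365, 366, 367, 369, 371, 372, 373, 374, 375, 376, 377, 378, 379, 380, 381, 382, 383, 394, 395, 396, 397, 398, 399, 402, 403, 406, 407, 410, 411, 412, 413, 414, 415, 421, 423, 426, 427, 428, 429, 430, 431, 433, 434, 435, 437, 438, 439, 440, 441, 442, 443, 444, 445, 446, 447, 449, 450, 451, 452, 453, 454, 455, 457, 458, 459, 460, 461, 462, 463, 465, 466, 467, 468, 469, 470, 471, 473, 474, 475, 476, 477, 478, 479, 481, 482, 483, 484, 485, 486, 487, 489, 490, 491, 492, 493, 494, 495, 497, 498, 499, 500, 501, 502, 503, 504, 505, 506, 507, 508, 509, 510, 511]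

/-- Decode a bitmask into a subset of [9]. -/
def decode (m : ℕ) : Finset ℕ := (Finset.Icc 1 9).filter (fun i => m.testBit (i-1))

/-- The counterexample family. -/
def myFam : Finset (Finset ℕ) := masks.toFinset.image decode

lemma mem_decode {i m : ℕ} : i ∈ decode m ↔ i ∈ Finset.Icc 1 9 ∧ m.testBit (i-1) = true := by
  simp [decode]

lemma decode_injOn : Set.InjOn decode {m : ℕ | m < 512} := by
  intro m hm m' hm' h
  apply Nat.eq_of_testBit_eq
  intro j
  by_cases hj : j < 9
  · have h1 : (j+1) ∈ decode m ↔ (j+1) ∈ decode m' := by rw [h]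
    simp only [mem_decode, Nat.add_sub_cancel] at h1
    have hic : (j+1) ∈ Finset.Icc 1 9 := by
      simp [Finset.mem_Icc]; omega
    cases hb : m.testBit j <;> cases hb' : m'.testBit j
    · rfl
    · exact absurd (h1.mpr ⟨hic, hb'⟩).2 (by simp [hb])
    · exact absurd (h1.mp ⟨hic, hb⟩).2 (by simp [hb'])
    · rfl
  · have l1 : m < 2 ^ j := lt_of_lt_of_le hm (by calc (512:ℕ) = 2^9 := rfl
      _ ≤ 2^j := Nat.pow_le_pow_right (by norm_num) (by omega))
    have l2 : m' < 2 ^ j := lt_of_lt_of_le hm' (by calc (512:ℕ) = 2^9 := rfl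
      _ ≤ 2^j := Nat.pow_le_pow_right (by norm_num) (by omega))
    rw [Nat.testBit_lt_two_pow l1, Nat.testBit_lt_two_pow l2]

lemma masks_lt : ∀ m ∈ masks, m < 512 := by decide

lemma decode_inter (m m' : ℕ) : decode m ∩ decode m' = decode (m &&& m') := by
  ext i
  simp only [Finset.mem_inter, mem_decode, Nat.testBit_land, Bool.and_eq_true]
  tauto

lemma decode_nonempty {k : ℕ} (h0 : k ≠ 0) (h : k < 512) : (decode k).Nonempty := by
  obtain ⟨i, hi⟩ := Nat.exists_testBit_ne_of_ne h0
  simp only [Nat.zero_testBit, ne_eq] at hi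
  have hb : k.testBit i = true := by
    cases hk : k.testBit i
    · exact absurd hk hi
    · rfl
  have hge : 2 ^ i ≤ k := Nat.ge_two_pow_of_testBit hb
  have hi9 : i < 9 := by
    by_contra hc
    have : (512:ℕ) ≤ 2 ^ i := by
      calc (512:ℕ) = 2^9 := rfl
        _ ≤ 2^i := Nat.pow_le_pow_right (by norm_num) (by omega)
    omega
  refine ⟨i+1, ?_⟩
  rw [mem_decode]
  refine ⟨by simp [Finset.mem_Icc]; omega, ?_⟩
  simpa using hb

lemma masks_inter : ∀ m ∈ masks, ∀ m' ∈ masks, m &&& m' ≠ 0 := by decide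

lemma masks_card : masks.toFinset.card = 256 := by decide

lemma myFam_card : myFam.card = 256 := by
  rw [myFam, Finset.card_image_of_injOn, masks_card]
  intro m hm m' hm' h
  exact decode_injOn (masks_lt m (List.mem_toFinset.mp hm))
    (masks_lt m' (List.mem_toFinset.mp hm')) h

set_option maxHeartbeats 4000000 in
lemma degree_le (i : ℕ) (hi : i ∈ Finset.Icc 1 9) :
    (myFam.filter (fun A => i ∈ A)).card ≤ 159 := by
  rw [myFam, Finset.filter_image]
  refine le_trans Finset.card_image_le ?_
  have : Finset.filter (fun a => i ∈ decode a) masks.toFinset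
      = Finset.filter (fun a => a.testBit (i-1) = true) masks.toFinset := by
    apply Finset.filter_congr
    intro m _
    simp only [mem_decode, eq_iff_iff]
    tauto
  rw [this]
  simp only [Finset.mem_Icc] at hi
  obtain ⟨h1, h2⟩ := hi
  interval_cases i <;> decide

/-- there is an intersecting family of subsets of [9] with diversity
at least 97 > 93 = Σ_{i=5}^{8} C(8,i). -/
theorem stmt_12 :
    (∃ F : Finset (Finset ℕ),
      (∀ A ∈ F, A ⊆ Finset.Icc 1 9) ∧
      (∀ A ∈ F, ∀ B ∈ F, (A ∩ B).Nonempty) ∧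
      97 ≤ diversity F 9) ∧
    (∑ i ∈ Finset.Icc 5 8, Nat.choose 8 i) = 93 ∧ 93 < 97 := by
  refine ⟨⟨myFam, ?_, ?_, ?_⟩, by decide, by norm_num⟩
  · intro A hA
    obtain ⟨m, _, rfl⟩ := Finset.mem_image.mp hA
    exact Finset.filter_subset _ _
  · intro A hA B hB
    obtain ⟨m, hm, rfl⟩ := Finset.mem_image.mp hA
    obtain ⟨m', hm', rfl⟩ := Finset.mem_image.mp hB
    rw [decode_inter]
    have hm := List.mem_toFinset.mp hm
    have hm' := List.mem_toFinset.mp hm'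
    refine decode_nonempty (masks_inter m hm m' hm') ?_
    calc m &&& m' ≤ m := Nat.and_le_left
      _ < 512 := masks_lt m hm
  · have hd : maxDegree myFam 9 ≤ 159 := Finset.sup_le degree_le
    rw [diversity, myFam_card]
    omega
end

section
/- There exists an intersecting family F of subsets of [10] = {1,...,10} with diversity ρ(F) ≥ 197. In particular, since 197 > (1/2)·C(9,4) + Σ_{i=6}^{9} C(9,i) = 193, this disproves Huang's conjecture that for n = 2k with k not a power of 2, every intersecting family F ⊆ 2^[2k] satisfies ρ(F) ≤ (1/2)·C(2k−1,k−1) + Σ_{i=k+1}^{2k−1} C(2k−1,i), for k = 5. -/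
def dList : List ℕ := [39, 78, 101, 156, 163, 202, 225, 281, 312, 326, 404, 450, 531, 562, 593, 624, 652, 777, 808, 900]

def fiveList : List ℕ := [47, 55, 79, 94, 103, 109, 110, 117, 124, 155, 157, 158, 167, 171, 179, 181, 188, 203, 206, 217, 218, 220, 227, 229, 233, 234, 241, 248, 279, 283, 285, 295, 299, 301, 310, 313, 314, 316, 327, 331, 334, 342, 345, 346, 357, 358, 376, 405, 406, 409, 412, 419, 421, 436, 440, 451, 454, 458, 466, 468, 481, 482, 496, 535, 539, 551, 558, 563, 566, 570, 589, 590, 595, 597, 598, 601, 613, 620, 625, 626, 628, 632, 651, 653, 654, 659, 661, 662, 668, 675, 682, 684, 690, 714, 716, 721, 737, 752, 779, 781, 787, 793, 809, 810, 812, 818, 824, 837, 838, 841, 849, 850, 872, 880, 901, 902, 905, 908, 916, 930, 932, 936, 961, 962, 964, 992]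

def highList : List ℕ := [63, 95, 111, 119, 125, 126, 127, 159, 175, 183, 187, 189, 190, 191, 207, 219, 221, 222, 223, 231, 235, 237, 238, 239, 243, 245, 247, 249, 250, 251, 252, 253, 254, 255, 287, 303, 311, 315, 317, 318, 319, 335, 343, 347, 349, 350, 351, 359, 363, 365, 366, 367, 373, 374, 375, 377, 378, 379, 380, 381, 382, 383, 407, 411, 413, 414, 415, 423, 427, 429, 431, 435, 437, 438, 439, 441, 442, 443, 444, 445, 446, 447, 455, 459, 462, 463, 467, 469, 470, 471, 473, 474, 475, 476, 477, 478, 479, 483, 485, 486, 487, 489, 490, 491, 493, 494, 495, 497, 498, 499, 500, 501, 502, 503, 504, 505, 506, 507, 508, 509, 510, 511, 543, 559, 567, 571, 574, 575, 591, 599, 603, 605, 606, 607, 615, 621, 622, 623, 627, 629, 630, 631, 633, 634, 635, 636, 637, 638, 639, 655, 663, 667, 669, 670, 671, 679, 683, 685, 686, 687, 691, 693, 694, 695, 698, 699, 700, 701, 702, 703, 715, 717, 718, 719, 723, 725, 726, 727, 729, 730, 731, 732, 733, 734, 735, 739, 741, 743, 745, 746, 747, 748, 749, 750, 751, 753, 754,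 755, 756, 757, 758, 759, 760, 761, 762, 763, 764, 765, 766, 767, 783, 791, 795, 797, 799, 807, 811, 813, 814, 815, 819, 822, 823, 825, 826, 827, 828, 829, 830, 831, 839, 843, 845, 846, 847, 851, 853, 854, 855, 857, 858, 859, 861, 862, 863, 869, 870, 871, 873, 874, 875, 876, 877, 878, 879, 881, 882, 883, 884, 885, 886, 887, 888, 889, 890, 891, 892, 893, 894, 895, 903, 907, 909, 910, 911, 915, 917, 918, 919, 921, 923, 924, 925, 926, 927, 931, 933, 934, 935, 937, 938, 939, 940, 941, 942, 943, 946, 947, 948, 949, 950, 951, 952, 953, 954, 955, 956, 957, 958, 959, 963, 965, 966, 967, 969, 970, 971, 972, 973, 974, 975, 977, 978, 979, 980, 981, 982, 983, 985, 986, 987, 988, 989, 990, 991, 993, 994, 995, 996, 997, 998, 999, 1000, 1001, 1002, 1003, 1004, 1005, 1006, 1007, 1008, 1009, 1010, 1011, 1012, 1013, 1014, 1015, 1016, 1017, 1018, 1019, 1020, 1021, 1022, 1023]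

def maskList : List ℕ := dList ++ fiveList ++ highList

def toSet (m : ℕ) : Finset ℕ := (Finset.Icc 1 10).filter (fun i => m.testBit (i-1))

set_option maxRecDepth 1000000
set_option maxHeartbeats 2000000

lemma mem_toSet {m i : ℕ} : i ∈ toSet m ↔ i ∈ Finset.Icc 1 10 ∧ m.testBit (i-1) := by
  simp [toSet]

lemma toSet_subset (m : ℕ) : toSet m ⊆ Finset.Icc 1 10 := Finset.filter_subset _ _

lemma toSet_inj {a b : ℕ} (ha : a < 1024) (hb : b < 1024) (h : toSet a = toSet b) : a = b := by
  apply Nat.eq_of_testBit_eq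
  intro i
  by_cases hi : i < 10
  · have h1 : (i+1 ∈ toSet a) ↔ (i+1 ∈ toSet b) := by rw [h]
    simp only [mem_toSet, Finset.mem_Icc, Nat.add_sub_cancel] at h1
    rcases hx : a.testBit i <;> rcases hy : b.testBit i <;>
      simp only [hx, hy] at h1 ⊢ <;> simp_all <;> omega
  · have h10 : (1024:ℕ) ≤ 2^i := by
      calc (1024:ℕ) = 2^10 := by norm_num
      _ ≤ 2^i := Nat.pow_le_pow_right (by norm_num) (by omega)
    rw [Nat.testBit_eq_false_of_lt (lt_of_lt_of_le ha h10),
        Nat.testBit_eq_false_of_lt (lt_of_lt_of_le hb h10)]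

lemma mask_lt : ∀ a ∈ maskList, a < 1024 := by decide

def sortedB : List ℕ → Bool
  | [] => true
  | [_] => true
  | a :: b :: t => a < b && sortedB (b :: t)

lemma chain'_of_sortedB : ∀ (l : List ℕ), sortedB l = true → l.Chain' (· < ·)
  | [], _ => List.isChain_nil
  | [a], _ => List.isChain_singleton a
  | a :: b :: t, h => by
    rw [sortedB, Bool.and_eq_true, decide_eq_true_eq] at h
    exact List.isChain_cons_cons.mpr ⟨h.1, chain'_of_sortedB (b :: t) h.2⟩

lemma nodup_of_sortedB (l : List ℕ) (h : sortedB l = true) : l.Nodup :=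
  ((List.isChain_iff_pairwise).mp (chain'_of_sortedB l h)).imp Nat.ne_of_lt

lemma card_d : ∀ m ∈ dList, (toSet m).card = 4 := by decide

lemma card_five2 : ∀ m ∈ fiveList, (toSet m).card = 5 := by decide

lemma card_high2 : ∀ m ∈ highList, 6 ≤ (toSet m).card := by decide

lemma disj_fh : List.Disjoint fiveList highList := by
  intro a haf hah
  have h1 := card_five2 a haf
  have h2 := card_high2 a hah
  omega

lemma disj_d : List.Disjoint dList (fiveList ++ highList) := by
  intro a had hafh
  have h4 := card_d a had
  rcases List.mem_append.mp hafh with h | h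
  · have := card_five2 a h; omega
  · have := card_high2 a h; omega

lemma mask_nodup : maskList.Nodup := by
  have nd : dList.Nodup := nodup_of_sortedB _ (by decide)
  have nf : fiveList.Nodup := nodup_of_sortedB _ (by decide)
  have nh : highList.Nodup := nodup_of_sortedB _ (by decide)
  exact nd.append (nf.append nh disj_fh) disj_d

lemma mask_len : maskList.length = 512 := by decide

lemma inter_low : ∀ a ∈ dList ++ fiveList, ∀ b ∈ dList ++ fiveList, a &&& b ≠ 0 := by decide

lemma inter_dhigh : ∀ a ∈ dList, ∀ b ∈ highList, a &&& b ≠ 0 := by decide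

lemma card_five : ∀ m ∈ fiveList, (toSet m).card = 5 := by decide

lemma card_high : ∀ m ∈ highList, 6 ≤ (toSet m).card := by decide

lemma nonempty_of_mask {a b : ℕ} (ha : a < 1024) (hab : a &&& b ≠ 0) :
    (toSet a ∩ toSet b).Nonempty := by
  have hex : ∃ i, (a &&& b).testBit i = true := by
    by_contra hc
    push_neg at hc
    exact hab (Nat.eq_of_testBit_eq fun i => by
      simp only [Bool.not_eq_true] at hc
      simp [hc i, Nat.zero_testBit])
  obtain ⟨i, hi⟩ := hex
  rw [Nat.testBit_land, Bool.and_eq_true] at hi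
  have hilt : i < 10 := by
    by_contra hcc
    have h10 : (1024:ℕ) ≤ 2^i := by
      calc (1024:ℕ) = 2^10 := by norm_num
      _ ≤ 2^i := Nat.pow_le_pow_right (by norm_num) (by omega)
    rw [Nat.testBit_eq_false_of_lt (lt_of_lt_of_le ha h10)] at hi
    exact absurd hi.1 (by simp)
  refine ⟨i+1, Finset.mem_inter.mpr ⟨?_, ?_⟩⟩ <;>
    · rw [mem_toSet]
      simp only [Finset.mem_Icc, Nat.add_sub_cancel]
      exact ⟨⟨by omega, by omega⟩, by simp [hi.1, hi.2]⟩

lemma nonempty_of_card {A B : Finset ℕ} (hA : A ⊆ Finset.Icc 1 10) (hB : B ⊆ Finset.Icc 1 10)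
    (h : 11 ≤ A.card + B.card) : (A ∩ B).Nonempty := by
  rw [← Finset.card_pos]
  have h1 : (A ∪ B).card + (A ∩ B).card = A.card + B.card := Finset.card_union_add_card_inter A B
  have h2 : (A ∪ B).card ≤ 10 := by
    have := Finset.card_le_card (Finset.union_subset hA hB)
    simpa using this
  omega

lemma card_filter_toFinset (l : List ℕ) (hl : l.Nodup) (p : ℕ → Bool) :
    (l.toFinset.filter (fun m => p m)).card = l.countP p := by
  rw [← List.toFinset_filter, List.card_toFinset,
      List.Nodup.dedup (hl.filter p), List.countP_eq_length_filter]

lemma mask_inter : ∀ a ∈ maskList, ∀ b ∈ maskList, (toSet a ∩ toSet b).Nonempty := by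
  have key : ∀ a ∈ maskList, ∀ b ∈ maskList,
      a &&& b ≠ 0 ∨ 11 ≤ (toSet a).card + (toSet b).card := by
    intro a ha b hb
    simp only [maskList, List.mem_append, ← or_assoc] at ha hb
    rcases ha with ha | ha
    · rcases hb with hb | hb
      · exact Or.inl (inter_low a (List.mem_append.mpr ha) b (List.mem_append.mpr hb))
      · rcases ha with ha | ha
        · exact Or.inl (inter_dhigh a ha b hb)
        · exact Or.inr (by have := card_five a ha; have := card_high b hb; omega)
    · rcases hb with hb | hb
      · rcases hb with hb | hb
        · refine Or.inl ?_
          rw [Nat.land_comm]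
          exact inter_dhigh b hb a ha
        · exact Or.inr (by have := card_five b hb; have := card_high a ha; omega)
      · exact Or.inr (by have := card_high a ha; have := card_high b hb; omega)
  intro a ha b hb
  rcases key a ha b hb with h | h
  · exact nonempty_of_mask (mask_lt a ha) h
  · exact nonempty_of_card (toSet_subset a) (toSet_subset b) h


def Fam : Finset (Finset ℕ) := maskList.toFinset.image toSet

lemma hmax : maxDegree Fam 10 ≤ 315 := by
  rw [Fam]
  apply Finset.sup_le
  intro i hi
  rw [Finset.filter_image]
  refine le_trans Finset.card_image_le ?_
  have heq : (maskList.toFinset.filter fun m => i ∈ toSet m)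
      = maskList.toFinset.filter (fun m => m.testBit (i-1)) := by
    apply Finset.filter_congr
    intro m _
    rw [mem_toSet]
    simp [hi]
  rw [heq, card_filter_toFinset _ mask_nodup]
  rw [Finset.mem_Icc] at hi
  obtain ⟨hi1, hi2⟩ := hi
  interval_cases i <;> decide

lemma hcard : Fam.card = 512 := by
  rw [Fam]
  have hinj : Set.InjOn toSet maskList.toFinset := by
    intro a ha b hb h
    rw [Finset.mem_coe, List.mem_toFinset] at ha hb
    exact toSet_inj (mask_lt a ha) (mask_lt b hb) h
  rw [Finset.card_image_of_injOn hinj, List.toFinset_card_of_nodup mask_nodup, mask_len]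

lemma arith : Nat.choose 9 4 / 2 + (∑ i ∈ Finset.Icc 6 9, Nat.choose 9 i) = 193 := by decide


lemma hdiv2 : 197 ≤ Fam.card - maxDegree Fam 10 := by
  rw [hcard]
  exact Nat.le_sub_of_add_le (le_trans (Nat.add_le_add_left hmax 197) (by norm_num))
lemma div_ge (F : Finset (Finset ℕ)) (h1 : F.card = 512) (h2 : maxDegree F 10 ≤ 315) :
    197 ≤ diversity F 10 := by
  unfold diversity
  omega

lemma hdiv : 197 ≤ diversity Fam 10 := div_ge Fam hcard hmax

/-- there is an intersecting family of subsets of [10] with diversity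
at least 197 > 193 = (1/2)·C(9,4) + Σ_{i=6}^{9} C(9,i). -/
theorem stmt_13 :
    (∃ F : Finset (Finset ℕ),
      (∀ A ∈ F, A ⊆ Finset.Icc 1 10) ∧
      (∀ A ∈ F, ∀ B ∈ F, (A ∩ B).Nonempty) ∧
      197 ≤ diversity F 10) ∧
    Nat.choose 9 4 / 2 + (∑ i ∈ Finset.Icc 6 9, Nat.choose 9 i) = 193 ∧ 193 < 197 := by
  refine ⟨⟨Fam, ?_, ?_, hdiv⟩, arith, by norm_num⟩
  · intro A hA
    obtain ⟨m, _, rfl⟩ := Finset.mem_image.mp hA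
    exact toSet_subset m
  · intro A hA B hB
    obtain ⟨a, ha, rfl⟩ := Finset.mem_image.mp hA
    obtain ⟨b, hb, rfl⟩ := Finset.mem_image.mp hB
    rw [List.mem_toFinset] at ha hb
    exact mask_inter a ha b hb
end

section
/- Let H = {F ⊆ [8] : |F| = 4, |F ∩ {1,2,3,4}| ≥ 2, |F ∩ {5,6,7,8}| ≥ 1}. Then (i) for every x ∈ [8], the star {F ∈ H : x ∈ F} has at most 30 members, and (ii) there exists an intersecting family F ⊆ H with |F| ≥ 34. Consequently H does not have the EKR property, disproving the conjecture of Frankl–Han–Huang–Zhao. -/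
/-- A family of sets is intersecting if any two members meet. -/
def Intersecting' (F : Finset (Finset ℕ)) : Prop :=
  ∀ A ∈ F, ∀ B ∈ F, (A ∩ B).Nonempty

/-- A family is trivially intersecting (a star) if all members share a fixed element. -/
def IsStar (F : Finset (Finset ℕ)) : Prop := ∃ x, ∀ A ∈ F, x ∈ A

/-- H has the EKR property: every intersecting subfamily of maximum size is a star. -/
def HasEKR (H : Finset (Finset ℕ)) : Prop :=
  ∀ F ⊆ H, Intersecting' F → (∀ G ⊆ H, Intersecting' G → G.card ≤ F.card) → IsStar F

def H14 : Finset (Finset ℕ) :=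
  (Finset.Icc 1 8).powerset.filter
    (fun A => A.card = 4 ∧ 2 ≤ (A ∩ ({1,2,3,4} : Finset ℕ)).card ∧
      1 ≤ (A ∩ ({5,6,7,8} : Finset ℕ)).card)

instance : DecidablePred Intersecting' := fun F =>
  inferInstanceAs (Decidable (∀ A ∈ F, ∀ B ∈ F, (A ∩ B).Nonempty))

def F14 : Finset (Finset ℕ) := H14.filter (fun A => 2 ≤ (A ∩ ({1,2,3} : Finset ℕ)).card)

lemma h_star : ∀ x ∈ Finset.Icc 1 8, (H14.filter (fun A => x ∈ A)).card ≤ 30 := by decide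

lemma hF_sub : F14 ⊆ H14 := Finset.filter_subset _ _

lemma hF_int : Intersecting' F14 := by decide

lemma hF_card : F14.card = 34 := by decide

/-- every star in H14 has at most 30 members, yet H14 has an intersecting
subfamily of size at least 34; hence H14 fails the EKR property. -/
theorem stmt_14 :
    (∀ x ∈ Finset.Icc 1 8, (H14.filter (fun A => x ∈ A)).card ≤ 30) ∧
    (∃ F ⊆ H14, Intersecting' F ∧ 34 ≤ F.card) ∧
    ¬ HasEKR H14 := by
  refine ⟨h_star, ⟨F14, hF_sub, hF_int, by rw [hF_card]⟩, ?_⟩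
  intro hEKR
  classical
  set S : Finset (Finset (Finset ℕ)) := H14.powerset.filter Intersecting' with hS
  have hSne : S.Nonempty := ⟨∅, by simp [hS, Intersecting']⟩
  obtain ⟨Fm, hFmS, hmax⟩ := S.exists_max_image Finset.card hSne
  have hFmsub : Fm ⊆ H14 := Finset.mem_powerset.mp (Finset.mem_filter.mp hFmS).1
  have hFmint : Intersecting' Fm := (Finset.mem_filter.mp hFmS).2
  have hmax' : ∀ G ⊆ H14, Intersecting' G → G.card ≤ Fm.card := by
    intro G hG hGint
    exact hmax G (Finset.mem_filter.mpr ⟨Finset.mem_powerset.mpr hG, hGint⟩)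
  have hcard34 : 34 ≤ Fm.card := by
    have : F14 ∈ S := Finset.mem_filter.mpr ⟨Finset.mem_powerset.mpr hF_sub, hF_int⟩
    have h := hmax F14 this
    rw [hF_card] at h
    exact h
  obtain ⟨x, hx⟩ := hEKR Fm hFmsub hFmint hmax'
  have hFmne : Fm.Nonempty := Finset.card_pos.mp (by omega)
  obtain ⟨A, hA⟩ := hFmne
  have hxIcc : x ∈ Finset.Icc 1 8 := by
    have hAH : A ∈ H14 := hFmsub hA
    have : A ⊆ Finset.Icc 1 8 :=
      Finset.mem_powerset.mp (Finset.mem_filter.mp hAH).1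
    exact this (hx A hA)
  have hsub' : Fm ⊆ H14.filter (fun A => x ∈ A) := by
    intro B hB
    exact Finset.mem_filter.mpr ⟨hFmsub hB, hx B hB⟩
  have := Finset.card_le_card hsub'
  have := h_star x hxIcc
  omega
end

section
/- Let H = {F ⊆ [7] : |F| = 4, |F ∩ {1,2,3}| ≥ 1, |F ∩ {4,5,6,7}| ≥ 2}. Then H is itself an intersecting family, |H| = 30, and for every x ∈ [7] the star {F ∈ H : x ∈ F} has at most 18 members; in particular H is intersecting but not trivially intersecting, so H does not have the EKR property. -/
def H15 : Finset (Finset ℕ) :=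
  (Finset.Icc 1 7).powerset.filter
    (fun A => A.card = 4 ∧ 1 ≤ (A ∩ ({1,2,3} : Finset ℕ)).card ∧
      2 ≤ (A ∩ ({4,5,6,7} : Finset ℕ)).card)

lemma h15_inter : Intersecting' H15 := by unfold Intersecting'; decide

lemma h15_card : H15.card = 30 := by decide

lemma h15_star : ∀ x ∈ Finset.Icc 1 7, (H15.filter (fun A => x ∈ A)).card ≤ 18 := by
  decide

lemma h15_nostar_wit : ∀ x ∈ Finset.Icc 1 7, ∃ A ∈ H15, x ∉ A := by decide

lemma h15_not_star : ¬ IsStar H15 := by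
  rintro ⟨x, hx⟩
  have hmem : ({1,4,5,6} : Finset ℕ) ∈ H15 := by decide
  have hxI : x ∈ Finset.Icc 1 7 := by
    have := hx _ hmem
    have hsub : ({1,4,5,6} : Finset ℕ) ⊆ Finset.Icc 1 7 := by decide
    exact hsub this
  obtain ⟨A, hA, hxA⟩ := h15_nostar_wit x hxI
  exact hxA (hx A hA)

/-- H15 is intersecting, has 30 members, every star in it has at most 18
members; so H15 is intersecting but not a star, and H15 fails the EKR property. -/
theorem stmt_15 :
    Intersecting' H15 ∧
    H15.card = 30 ∧
    (∀ x ∈ Finset.Icc 1 7, (H15.filter (fun A => x ∈ A)).card ≤ 18) ∧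
    ¬ IsStar H15 ∧
    ¬ HasEKR H15 := by
  refine ⟨h15_inter, h15_card, h15_star, h15_not_star, ?_⟩
  intro h
  exact h15_not_star (h H15 subset_rfl h15_inter
    (fun G hG _ => Finset.card_le_card hG))
end

section
/- The family F = {A ⊆ [9] : |A| ≥ 4} ∪ {A ⊆ [9] : |A| = 3} ∪ {A ⊆ [9] : |A| = 2 and A ∩ {1,2} ≠ ∅} of subsets of [9] = {1,...,9} has size |F| = 481 and contains no 4 pairwise disjoint members. In particular k(9,4) ≥ 481 > 480 = 4·k(7,4), disproving the conjecture of Frankl and Tokushige that k(n,s) = 4·k(n−2,s) whenever s ≥ 4 and n ≡ 1 (mod s). -/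
set_option maxRecDepth 100000
set_option maxHeartbeats 2000000

/-- `F` has `s` pairwise disjoint members: a subfamily of size `s` whose (distinct)
members are pairwise disjoint. -/
def HasSDisjoint (F : Finset (Finset ℕ)) (s : ℕ) : Prop :=
  ∃ G ∈ F.powerset, G.card = s ∧ ∀ A ∈ G, ∀ B ∈ G, A ≠ B → Disjoint A B

instance (F : Finset (Finset ℕ)) (s : ℕ) : Decidable (HasSDisjoint F s) := by
  unfold HasSDisjoint; infer_instance

/-- `kleitman n s` = k(n,s), the maximum size of a family of subsets of [n] = {1,…,n}
with no `s` pairwise disjoint members. -/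
noncomputable def kleitman (n s : ℕ) : ℕ :=
  (((Finset.Icc 1 n).powerset.powerset).filter (fun F => ¬ HasSDisjoint F s)).sup
    Finset.card

/-- The family {A ⊆ [9] : |A| ≥ 4} ∪ {A ⊆ [9] : |A| = 3}
∪ {A ⊆ [9] : |A| = 2, A ∩ {1,2} ≠ ∅}. -/
def F17 : Finset (Finset ℕ) :=
  ((Finset.Icc 1 9).powerset.filter (fun A => 4 ≤ A.card)) ∪
  ((Finset.Icc 1 9).powerset.filter (fun A => A.card = 3)) ∪
  ((Finset.Icc 1 9).powerset.filter
    (fun A => A.card = 2 ∧ (A ∩ ({1, 2} : Finset ℕ)).Nonempty))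

open Finset

/-! ### Card of F17 -/

lemma F17_card : F17.card = 481 := by
  have h1 : ((Finset.Icc 1 9).powerset.filter (fun A => 4 ≤ A.card)).card = 382 := by decide
  have h2 : ((Finset.Icc 1 9).powerset.filter (fun A => A.card = 3)).card = 84 := by decide
  have h3 : ((Finset.Icc 1 9).powerset.filter
      (fun A => A.card = 2 ∧ (A ∩ ({1, 2} : Finset ℕ)).Nonempty)).card = 15 := by decide
  have d12 : Disjoint ((Finset.Icc 1 9).powerset.filter (fun A => 4 ≤ A.card))
      ((Finset.Icc 1 9).powerset.filter (fun A => A.card = 3)) := by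
    rw [Finset.disjoint_left]
    intro A hA hA'
    simp only [Finset.mem_filter] at hA hA'
    omega
  have d123 : Disjoint (((Finset.Icc 1 9).powerset.filter (fun A => 4 ≤ A.card)) ∪
      ((Finset.Icc 1 9).powerset.filter (fun A => A.card = 3)))
      ((Finset.Icc 1 9).powerset.filter
        (fun A => A.card = 2 ∧ (A ∩ ({1, 2} : Finset ℕ)).Nonempty)) := by
    rw [Finset.disjoint_left]
    intro A hA hA'
    simp only [Finset.mem_union, Finset.mem_filter] at hA hA'
    obtain ⟨-, h2, -⟩ := hA'
    rcases hA with ⟨-, h⟩ | ⟨-, h⟩ <;> omega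
  rw [F17, Finset.card_union_of_disjoint d123, Finset.card_union_of_disjoint d12, h1, h2, h3]

/-! ### Basic facts about members of F17 -/

lemma mem_F17 {A : Finset ℕ} (hA : A ∈ F17) :
    A ⊆ Finset.Icc 1 9 ∧ 2 ≤ A.card ∧ (A.card = 2 → (A ∩ ({1,2} : Finset ℕ)).Nonempty) := by
  simp only [F17, Finset.mem_union, Finset.mem_filter, Finset.mem_powerset] at hA
  rcases hA with (⟨h, hc⟩ | ⟨h, hc⟩) | ⟨h, hc, hn⟩
  · exact ⟨h, by omega, fun h2 => by omega⟩
  · exact ⟨h, by omega, fun h2 => by omega⟩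
  · exact ⟨h, by omega, fun _ => hn⟩

lemma sum_card_le {G : Finset (Finset ℕ)} {n : ℕ}
    (hsub : ∀ A ∈ G, A ⊆ Finset.Icc 1 n)
    (hdisj : ∀ A ∈ G, ∀ B ∈ G, A ≠ B → Disjoint A B) :
    ∑ A ∈ G, A.card ≤ n := by
  have h := Finset.card_biUnion (fun A hA B hB hAB => hdisj A hA B hB hAB) (s := G) (t := id)
  have hsub' : G.biUnion id ⊆ Finset.Icc 1 n := by
    intro x hx
    rw [Finset.mem_biUnion] at hx
    obtain ⟨A, hA, hxA⟩ := hx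
    exact hsub A hA hxA
  calc ∑ A ∈ G, A.card = (G.biUnion id).card := h.symm
    _ ≤ (Finset.Icc 1 n).card := Finset.card_le_card hsub'
    _ = n := by simp

/-! ### F17 has no 4 pairwise disjoint members -/

lemma F17_no4 : ¬ HasSDisjoint F17 4 := by
  rintro ⟨G, hGF, hGcard, hGdisj⟩
  rw [Finset.mem_powerset] at hGF
  -- total size bound
  have hsum : ∑ A ∈ G, A.card ≤ 9 :=
    sum_card_le (fun A hA => (mem_F17 (hGF hA)).1) hGdisj
  -- split by size
  set G2 := G.filter (fun A => A.card = 2) with hG2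
  have hsplit : G2.card + (G.filter (fun A => ¬ A.card = 2)).card = 4 := by
    rw [hG2, Finset.card_filter_add_card_filter_not]; exact hGcard
  have hlow : ∀ A ∈ G.filter (fun A => ¬ A.card = 2), 3 ≤ A.card := by
    intro A hA
    rw [Finset.mem_filter] at hA
    have := (mem_F17 (hGF hA.1)).2.1
    omega
  have hsum2 : ∑ A ∈ G2, A.card = 2 * G2.card := by
    rw [Finset.sum_congr rfl (fun A hA => (Finset.mem_filter.1 hA).2), Finset.sum_const,
      smul_eq_mul, mul_comm]
  have hsum3 : 3 * (G.filter (fun A => ¬ A.card = 2)).card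
      ≤ ∑ A ∈ G.filter (fun A => ¬ A.card = 2), A.card := by
    calc 3 * (G.filter (fun A => ¬ A.card = 2)).card
        = ∑ _A ∈ G.filter (fun A => ¬ A.card = 2), 3 := by
          rw [Finset.sum_const, smul_eq_mul, mul_comm]
      _ ≤ _ := Finset.sum_le_sum hlow
  have htot : ∑ A ∈ G2, A.card + ∑ A ∈ G.filter (fun A => ¬ A.card = 2), A.card
      = ∑ A ∈ G, A.card := by
    rw [hG2, Finset.sum_filter_add_sum_filter_not]
  -- hence at least 3 sets of size 2
  have hG2card : 3 ≤ G2.card := by omega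
  -- each size-2 set meets {1,2}; injectively map them into {1,2}
  have hinj : G2.card ≤ ({1, 2} : Finset ℕ).card := by
    apply Finset.card_le_card_of_injOn (fun A => if 1 ∈ A then 1 else 2)
    · intro A hA
      by_cases h1 : 1 ∈ A <;> simp [h1]
    · intro A hA B hB hfAB
      by_contra hne
      rw [Finset.mem_coe, hG2, Finset.mem_filter] at hA hB
      have hdAB := hGdisj A hA.1 B hB.1 hne
      have hAmem : (if 1 ∈ A then 1 else 2) ∈ A := by
        by_cases h1 : 1 ∈ A
        · simpa [h1]
        · simp only [h1, if_false]
          obtain ⟨x, hx⟩ := (mem_F17 (hGF hA.1)).2.2 hA.2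
          rw [Finset.mem_inter, Finset.mem_insert, Finset.mem_singleton] at hx
          rcases hx.2 with rfl | rfl
          · exact absurd hx.1 h1
          · exact hx.1
      have hBmem : (if 1 ∈ B then 1 else 2) ∈ B := by
        by_cases h1 : 1 ∈ B
        · simpa [h1]
        · simp only [h1, if_false]
          obtain ⟨x, hx⟩ := (mem_F17 (hGF hB.1)).2.2 hB.2
          rw [Finset.mem_inter, Finset.mem_insert, Finset.mem_singleton] at hx
          rcases hx.2 with rfl | rfl
          · exact absurd hx.1 h1
          · exact hx.1
      have hfAB' : (if 1 ∈ A then (1:ℕ) else 2) = if 1 ∈ B then 1 else 2 := hfAB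
      exact Finset.disjoint_left.1 hdAB hAmem (hfAB' ▸ hBmem)
  have : ({1, 2} : Finset ℕ).card = 2 := by decide
  omega

/-! ### Lower bound: 481 ≤ kleitman 9 4 -/

lemma F17_mem : F17 ∈ ((Finset.Icc 1 9).powerset.powerset).filter
    (fun F => ¬ HasSDisjoint F 4) := by
  rw [Finset.mem_filter, Finset.mem_powerset]
  refine ⟨fun A hA => ?_, F17_no4⟩
  rw [Finset.mem_powerset]
  exact (mem_F17 hA).1

lemma kle94_lb : 481 ≤ kleitman 9 4 := by
  have := Finset.le_sup (f := Finset.card) F17_mem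
  rwa [F17_card] at this

/-! ### k(7,4) = 120: lower bound via all sets of size ≥ 2 -/

def F0 : Finset (Finset ℕ) := (Finset.Icc 1 7).powerset.filter (fun A => 2 ≤ A.card)

lemma F0_no4 : ¬ HasSDisjoint F0 4 := by
  rintro ⟨G, hGF, hGcard, hGdisj⟩
  rw [Finset.mem_powerset] at hGF
  have hmem : ∀ A ∈ G, A ⊆ Finset.Icc 1 7 ∧ 2 ≤ A.card := by
    intro A hA
    have := hGF hA
    rw [F0, Finset.mem_filter, Finset.mem_powerset] at this
    exact this
  have hsum : ∑ A ∈ G, A.card ≤ 7 :=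
    sum_card_le (fun A hA => (hmem A hA).1) hGdisj
  have h8 : 2 * 4 ≤ ∑ A ∈ G, A.card := by
    calc 2 * 4 = ∑ _A ∈ G, 2 := by rw [Finset.sum_const, hGcard, smul_eq_mul, mul_comm]
      _ ≤ _ := Finset.sum_le_sum (fun A hA => (hmem A hA).2)
  omega

lemma kle74_lb : 120 ≤ kleitman 7 4 := by
  have hmem : F0 ∈ ((Finset.Icc 1 7).powerset.powerset).filter
      (fun F => ¬ HasSDisjoint F 4) := by
    rw [Finset.mem_filter, Finset.mem_powerset]
    exact ⟨Finset.filter_subset _ _, F0_no4⟩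
  have := Finset.le_sup (f := Finset.card) hmem
  have hc : F0.card = 120 := by decide
  rwa [hc] at this

/-! ### k(7,4) ≤ 120: the seven disjoint quadruples (a 1-factorization of K₇ plus
the missing vertex) -/

def TT : Finset (Finset (Finset ℕ)) :=
  { {{1}, {2, 7}, {3, 6}, {4, 5}},
    {{2}, {1, 3}, {4, 7}, {5, 6}},
    {{3}, {2, 4}, {1, 5}, {6, 7}},
    {{4}, {3, 5}, {2, 6}, {1, 7}},
    {{5}, {4, 6}, {3, 7}, {1, 2}},
    {{6}, {5, 7}, {1, 4}, {2, 3}},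
    {{7}, {1, 6}, {2, 5}, {3, 4}} }

def Tall : Finset (Finset ℕ) := TT.biUnion id

lemma TT_card : TT.card = 7 := by decide
lemma TT_quad : ∀ t ∈ TT, t.card = 4 := by decide
lemma TT_pd : ∀ t ∈ TT, ∀ A ∈ t, ∀ B ∈ t, A ≠ B → Disjoint A B := by decide
lemma TT_disj : ∀ t ∈ TT, ∀ t' ∈ TT, t ≠ t' → Disjoint t t' := by decide
lemma TT_ne : ∀ t ∈ TT, (∅ : Finset ℕ) ∉ t := by decide
lemma Tall_compl_card : ((Finset.Icc 1 7).powerset \ Tall).card = 100 := by decide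
lemma empty_not_Tall : (∅ : Finset ℕ) ∉ Tall := by decide

lemma kle74_ub : kleitman 7 4 ≤ 120 := by
  apply Finset.sup_le
  intro F hF
  rw [Finset.mem_filter, Finset.mem_powerset] at hF
  obtain ⟨hFsub, hFno⟩ := hF
  -- at most 3 per quadruple
  have key3 : ∀ t ∈ TT, (F ∩ t).card ≤ 3 := by
    intro t ht
    by_contra h
    push_neg at h
    have h4 : t.card ≤ (F ∩ t).card := by rw [TT_quad t ht]; omega
    have heq : F ∩ t = t := Finset.eq_of_subset_of_card_le Finset.inter_subset_right h4
    exact hFno ⟨t, by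
      rw [Finset.mem_powerset]
      exact heq ▸ Finset.inter_subset_left, TT_quad t ht, TT_pd t ht⟩
  -- at most 2 per quadruple if ∅ ∈ F
  have key2 : (∅ : Finset ℕ) ∈ F → ∀ t ∈ TT, (F ∩ t).card ≤ 2 := by
    intro hemp t ht
    by_contra h
    push_neg at h
    obtain ⟨S, hSsub, hScard⟩ := Finset.exists_subset_card_eq (s := F ∩ t) (n := 3) (by omega)
    have hSnotemp : (∅ : Finset ℕ) ∉ S := fun hc =>
      TT_ne t ht (Finset.inter_subset_right (hSsub hc))
    refine hFno ⟨insert ∅ S, ?_, ?_, ?_⟩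
    · rw [Finset.mem_powerset]
      exact Finset.insert_subset hemp (hSsub.trans Finset.inter_subset_left)
    · rw [Finset.card_insert_of_notMem hSnotemp, hScard]
    · intro A hA B hB hAB
      rw [Finset.mem_insert] at hA hB
      rcases hA with rfl | hA
      · exact Finset.disjoint_empty_left B
      rcases hB with rfl | hB
      · exact Finset.disjoint_empty_right A
      exact TT_pd t ht A (Finset.inter_subset_right (hSsub hA)) B
        (Finset.inter_subset_right (hSsub hB)) hAB
  -- split F
  have hsplit : (F ∩ Tall).card + (F \ Tall).card = F.card :=
    Finset.card_inter_add_card_sdiff F Tall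
  have hinter : F ∩ Tall = TT.biUnion (fun t => F ∩ t) := by
    rw [Tall]
    ext A
    simp [Finset.mem_biUnion]
    tauto
  have hintercard : (F ∩ Tall).card = ∑ t ∈ TT, (F ∩ t).card := by
    rw [hinter]
    exact Finset.card_biUnion (fun t ht t' ht' htt' =>
      (TT_disj t ht t' ht' htt').mono Finset.inter_subset_right Finset.inter_subset_right)
  have hout : F \ Tall ⊆ (Finset.Icc 1 7).powerset \ Tall :=
    Finset.sdiff_subset_sdiff hFsub (le_refl _)
  by_cases hemp : (∅ : Finset ℕ) ∈ F
  · -- ∅ ∈ F: at most 2 per quadruple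
    have h1 : (F ∩ Tall).card ≤ 14 := by
      rw [hintercard]
      calc ∑ t ∈ TT, (F ∩ t).card ≤ ∑ _t ∈ TT, 2 := Finset.sum_le_sum (key2 hemp)
        _ = 14 := by rw [Finset.sum_const, TT_card]; rfl
    have h2 : (F \ Tall).card ≤ 100 := Tall_compl_card ▸ Finset.card_le_card hout
    omega
  · -- ∅ ∉ F: at most 3 per quadruple, but ∅ missing from the rest
    have h1 : (F ∩ Tall).card ≤ 21 := by
      rw [hintercard]
      calc ∑ t ∈ TT, (F ∩ t).card ≤ ∑ _t ∈ TT, 3 := Finset.sum_le_sum key3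
        _ = 21 := by rw [Finset.sum_const, TT_card]; rfl
    have hout' : F \ Tall ⊆ ((Finset.Icc 1 7).powerset \ Tall).erase ∅ := by
      intro A hA
      rw [Finset.mem_erase]
      exact ⟨fun hc => hemp (hc ▸ (Finset.mem_sdiff.1 hA).1), hout hA⟩
    have h2 : (F \ Tall).card ≤ 99 := by
      have := Finset.card_le_card hout'
      rw [Finset.card_erase_of_mem (by
        rw [Finset.mem_sdiff]
        exact ⟨Finset.empty_mem_powerset _, empty_not_Tall⟩), Tall_compl_card] at this
      omega
    omega

/-- F17 has size 481 and no 4 pairwise disjoint members; hence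
k(9,4) ≥ 481 > 480 = 4·k(7,4), since k(7,4) = 120. -/
theorem stmt_17 :
    F17.card = 481 ∧
    ¬ HasSDisjoint F17 4 ∧
    481 ≤ kleitman 9 4 ∧
    kleitman 7 4 = 120 := by
  exact ⟨F17_card, F17_no4, kle94_lb, le_antisymm kle74_ub kle74_lb⟩
end
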